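/- arXiv:1303.4073 — 11 statements merged into one kernel-verified Lean document; each statement's English description precedes it below -/
import Mathlib

section
/- If D is a dual hyperoval of rank n over F_2 whose members are all totally singular with respect to a quadratic form of plus type on a 2n-dimensional F_2-space, then n is odd. -/
open Module Submodule

set_option linter.unusedSectionVars false

namespace OrthDHO

variable {V : Type*} [AddCommGroup V] [Module (ZMod 2) V] [FiniteDimensional (ZMod 2) V]
variable {Q : QuadraticForm (ZMod 2) V} {n : ℕ}

lemma polarBilin_self_zero (x : V) : Q.polarBilin x x = 0 := by
  rw [QuadraticMap.polarBilin_apply_apply, QuadraticMap.polar_self, two_nsmul]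
  exact CharTwo.add_self_eq_zero _

lemma polarBilin_symm (x y : V) : Q.polarBilin x y = Q.polarBilin y x := by
  rw [QuadraticMap.polarBilin_apply_apply, QuadraticMap.polarBilin_apply_apply,
    QuadraticMap.polar_comm]

lemma polarBilin_refl :
    LinearMap.IsRefl (Q.polarBilin : LinearMap.BilinForm (ZMod 2) V) := by
  intro x y h
  rwa [polarBilin_symm]

lemma polar_eq_zero_on {X : Submodule (ZMod 2) V} (hX : ∀ x ∈ X, Q x = 0) {x y : V}
    (hx : x ∈ X) (hy : y ∈ X) : Q.polarBilin x y = 0 := by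
  rw [QuadraticMap.polarBilin_apply_apply]
  unfold QuadraticMap.polar
  rw [hX _ (add_mem hx hy), hX _ hx, hX _ hy]
  ring

lemma q_add (x y : V) : Q (x + y) = Q x + Q y + Q.polarBilin x y := by
  rw [QuadraticMap.polarBilin_apply_apply]
  unfold QuadraticMap.polar
  ring

lemma vadd_self (x : V) : x + x = 0 := by
  rw [← two_smul (ZMod 2) x]
  have h2 : (2 : ZMod 2) = 0 := rfl
  rw [h2, zero_smul]

/-- maximal totally singular subspace (of dimension `n`). -/
def MTS (Q : QuadraticForm (ZMod 2) V) (n : ℕ) (X : Submodule (ZMod 2) V) : Prop :=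
  finrank (ZMod 2) X = n ∧ ∀ x ∈ X, Q x = 0

/-- orthogonal complement w.r.t. the polar form. -/
def perp (Q : QuadraticForm (ZMod 2) V) (U : Submodule (ZMod 2) V) : Submodule (ZMod 2) V :=
  LinearMap.BilinForm.orthogonal (Q.polarBilin) U

lemma mem_perp_iff {U : Submodule (ZMod 2) V} {x : V} :
    x ∈ perp Q U ↔ ∀ u ∈ U, Q.polarBilin u x = 0 :=
  Iff.rfl

variable (hdim : finrank (ZMod 2) V = 2 * n)
  (hnd : LinearMap.BilinForm.Nondegenerate (Q.polarBilin : LinearMap.BilinForm (ZMod 2) V))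

lemma perp_sup (p q : Submodule (ZMod 2) V) :
    perp Q (p ⊔ q) = perp Q p ⊓ perp Q q := by
  refine le_antisymm (le_inf (LinearMap.BilinForm.orthogonal_le le_sup_left)
    (LinearMap.BilinForm.orthogonal_le le_sup_right)) ?_
  intro x hx
  rw [mem_perp_iff]
  intro m hm
  obtain ⟨a, ha, b, hb, rfl⟩ := Submodule.mem_sup.mp hm
  have h1 := (Submodule.mem_inf.mp hx).1
  have h2 := (Submodule.mem_inf.mp hx).2
  rw [mem_perp_iff] at h1 h2
  have e1 : Q.polarBilin a x = 0 := h1 a ha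
  have e2 : Q.polarBilin b x = 0 := h2 b hb
  rw [map_add, LinearMap.add_apply, e1, e2, add_zero]

include hdim hnd in
lemma finrank_perp (U : Submodule (ZMod 2) V) :
    finrank (ZMod 2) (perp Q U) = 2 * n - finrank (ZMod 2) U := by
  rw [perp, LinearMap.BilinForm.finrank_orthogonal hnd, hdim]

lemma ts_le_perp {X : Submodule (ZMod 2) V} (hX : ∀ x ∈ X, Q x = 0)
    {U : Submodule (ZMod 2) V} (hU : U ≤ X) : X ≤ perp Q U := by
  intro x hx
  rw [mem_perp_iff]
  intro u hu
  exact polar_eq_zero_on hX (hU hu) hx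

include hdim hnd in
lemma mts_perp_self {X : Submodule (ZMod 2) V} (hX : MTS Q n X) : perp Q X = X := by
  have hle : X ≤ perp Q X := ts_le_perp hX.2 le_rfl
  have h1 : finrank (ZMod 2) (perp Q X) = n := by
    rw [finrank_perp hdim hnd, hX.1]; omega
  exact (Submodule.eq_of_le_of_finrank_le hle (by rw [h1, hX.1])).symm

include hdim hnd in
lemma mem_of_singular_of_mem_perp {F F' : Submodule (ZMod 2) V}
    (hF : MTS Q n F) (hF' : MTS Q n F')
    (hcap : finrank (ZMod 2) (F ⊓ F' : Submodule (ZMod 2) V) = n - 1)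
    (hne : F ≠ F') (hn : 0 < n)
    {m : V} (hm : m ∈ perp Q (F ⊓ F')) (hQm : Q m = 0) :
    m ∈ F ∨ m ∈ F' := by
  by_contra hcon
  push_neg at hcon
  obtain ⟨hmF, hmF'⟩ := hcon
  have hFM : F ≤ perp Q (F ⊓ F') := ts_le_perp hF.2 inf_le_left
  have hF'M : F' ≤ perp Q (F ⊓ F') := ts_le_perp hF'.2 inf_le_right
  have hMdim : finrank (ZMod 2) (perp Q (F ⊓ F')) = n + 1 := by
    rw [finrank_perp hdim hnd, hcap]
    have : finrank (ZMod 2) (F ⊓ F' : Submodule (ZMod 2) V) ≤ finrank (ZMod 2) V :=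
      Submodule.finrank_le _
    omega
  have hsupdim : finrank (ZMod 2) (F ⊔ F' : Submodule (ZMod 2) V) = n + 1 := by
    have := Submodule.finrank_sup_add_finrank_inf_eq F F'
    rw [hcap, hF.1, hF'.1] at this; omega
  have hsup : F ⊔ F' = perp Q (F ⊓ F') :=
    Submodule.eq_of_le_of_finrank_le (sup_le hFM hF'M) (by rw [hMdim, hsupdim])
  -- decompose m
  rw [← hsup] at hm
  obtain ⟨f, hf, f', hf', rfl⟩ := Submodule.mem_sup.mp hm
  have hfF' : f ∉ F' := fun h => hmF' (add_mem h hf')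
  have hf'F : f' ∉ F := fun h => hmF (add_mem hf h)
  -- Q (f + f') = B f f'
  have hBff' : Q.polarBilin f f' = 0 := by
    have := q_add (Q := Q) f f'
    rw [hF.2 f hf, hF'.2 f' hf', hQm] at this
    simpa using this.symm
  -- F = (F ⊓ F') ⊔ span f
  have hfnotin : f ∉ F ⊓ F' := fun h => hfF' (Submodule.mem_inf.mp h).2
  have hspanf : (F ⊓ F') ⊔ (Submodule.span (ZMod 2) {f}) = F := by
    have hle : (F ⊓ F') ⊔ (Submodule.span (ZMod 2) {f}) ≤ F :=
      sup_le inf_le_left ((Submodule.span_singleton_le_iff_mem f F).mpr hf)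
    refine Submodule.eq_of_le_of_finrank_le hle ?_
    have hdisj : (F ⊓ F') ⊓ ((Submodule.span (ZMod 2) {f})) = ⊥ := by
      rw [Submodule.eq_bot_iff]
      intro x hx
      obtain ⟨hx1, hx2⟩ := Submodule.mem_inf.mp hx
      obtain ⟨c, rfl⟩ := Submodule.mem_span_singleton.mp hx2
      have hc : c = 0 ∨ c = 1 := by
        have : ∀ d : ZMod 2, d = 0 ∨ d = 1 := by decide
        exact this c
      rcases hc with rfl | rfl
      · simp
      · exfalso; rw [one_smul] at hx1; exact hfnotin hx1
    have hfne : f ≠ 0 := by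
      rintro rfl; exact hfnotin (Submodule.zero_mem _)
    have := Submodule.finrank_sup_add_finrank_inf_eq (F ⊓ F') ((Submodule.span (ZMod 2) {f}))
    rw [hdisj, hcap, finrank_span_singleton hfne, finrank_bot] at this
    have h3 := hF.1
    omega
  -- f' is perpendicular to F, hence in F
  have hf'perp : f' ∈ perp Q F := by
    rw [← hspanf]
    rw [mem_perp_iff]
    intro u hu
    obtain ⟨a, ha, b, hb, rfl⟩ := Submodule.mem_sup.mp hu
    obtain ⟨c, rfl⟩ := Submodule.mem_span_singleton.mp hb
    rw [map_add, LinearMap.add_apply]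
    have e1 : Q.polarBilin a f' = 0 :=
      polar_eq_zero_on hF'.2 (Submodule.mem_inf.mp ha).2 hf'
    have e2 : Q.polarBilin (c • f) f' = 0 := by
      rw [map_smul, LinearMap.smul_apply, hBff', smul_zero]
    rw [e1, e2, add_zero]
  rw [mts_perp_self hdim hnd hF] at hf'perp
  exact hf'F hf'perp

include hdim hnd in
lemma step_parity {F F' Z : Submodule (ZMod 2) V}
    (hF : MTS Q n F) (hF' : MTS Q n F') (hZ : MTS Q n Z)
    (hcap : finrank (ZMod 2) (F ⊓ F' : Submodule (ZMod 2) V) = n - 1) (hn : 0 < n) :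
    Odd (finrank (ZMod 2) (Z ⊓ F : Submodule (ZMod 2) V) +
      finrank (ZMod 2) (Z ⊓ F' : Submodule (ZMod 2) V)) := by
  have hne : F ≠ F' := by
    rintro rfl
    rw [inf_idem, hF.1] at hcap
    omega
  set M := perp Q (F ⊓ F') with hM
  have hFM : F ≤ M := ts_le_perp hF.2 inf_le_left
  have hF'M : F' ≤ M := ts_le_perp hF'.2 inf_le_right
  -- dim (Z ⊓ M) = dim (Z ⊓ (F ⊓ F')) + 1
  have hZM : Z ⊓ M = perp Q (Z ⊔ (F ⊓ F')) := by
    rw [perp_sup, mts_perp_self hdim hnd hZ]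
  have hd0le : finrank (ZMod 2) (Z ⊓ (F ⊓ F') : Submodule (ZMod 2) V) ≤ n - 1 := by
    have := Submodule.finrank_mono (inf_le_right :
      (Z ⊓ (F ⊓ F') : Submodule (ZMod 2) V) ≤ F ⊓ F')
    omega
  have hsupd : finrank (ZMod 2) ((Z ⊔ (F ⊓ F')) : Submodule (ZMod 2) V) =
      n + (n-1) - finrank (ZMod 2) (Z ⊓ (F ⊓ F') : Submodule (ZMod 2) V) := by
    have := Submodule.finrank_sup_add_finrank_inf_eq Z (F ⊓ F')
    rw [hZ.1, hcap] at this
    omega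
  have hsuple : finrank (ZMod 2) ((Z ⊔ (F ⊓ F')) : Submodule (ZMod 2) V) ≤ 2 * n := by
    rw [← hdim]; exact Submodule.finrank_le _
  have hZMd : finrank (ZMod 2) (Z ⊓ M : Submodule (ZMod 2) V) =
      finrank (ZMod 2) (Z ⊓ (F ⊓ F') : Submodule (ZMod 2) V) + 1 := by
    rw [hZM, finrank_perp hdim hnd, hsupd]
    omega
  -- dichotomy
  have hdich : (Z ⊓ M : Submodule (ZMod 2) V) ≤ F ∨ (Z ⊓ M : Submodule (ZMod 2) V) ≤ F' := by
    by_contra hcon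
    push_neg at hcon
    obtain ⟨h1, h2⟩ := hcon
    obtain ⟨a, ha, haF⟩ := SetLike.not_le_iff_exists.mp h1
    obtain ⟨b, hb, hbF'⟩ := SetLike.not_le_iff_exists.mp h2
    have haM := (Submodule.mem_inf.mp ha).2
    have hbM := (Submodule.mem_inf.mp hb).2
    have haZ := (Submodule.mem_inf.mp ha).1
    have hbZ := (Submodule.mem_inf.mp hb).1
    have haF' : a ∈ F' :=
      (mem_of_singular_of_mem_perp hdim hnd hF hF' hcap hne hn haM (hZ.2 a haZ)).resolve_left haF
    have hbF : b ∈ F :=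
      (mem_of_singular_of_mem_perp hdim hnd hF hF' hcap hne hn hbM (hZ.2 b hbZ)).resolve_right hbF'
    have hab : a + b ∈ (Z ⊓ M : Submodule (ZMod 2) V) := add_mem ha hb
    have habZ := (Submodule.mem_inf.mp hab).1
    have habM := (Submodule.mem_inf.mp hab).2
    rcases mem_of_singular_of_mem_perp hdim hnd hF hF' hcap hne hn habM
        (hZ.2 _ habZ) with hcase | hcase
    · have : a = (a + b) + b := by rw [add_assoc, vadd_self, add_zero]
      exact haF (this ▸ add_mem hcase hbF)
    · have : b = a + (a + b) := by rw [← add_assoc, vadd_self, zero_add]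
      exact hbF' (this ▸ add_mem haF' hcase)
  -- conclude in each case
  rcases hdich with hcase | hcase
  · have e1 : (Z ⊓ F : Submodule (ZMod 2) V) = Z ⊓ M :=
      le_antisymm (inf_le_inf_left Z hFM) (le_inf inf_le_left hcase)
    have e2 : (Z ⊓ F' : Submodule (ZMod 2) V) = Z ⊓ (F ⊓ F') := by
      refine le_antisymm ?_ (inf_le_inf_left Z inf_le_right)
      intro x hx
      have hxZ := (Submodule.mem_inf.mp hx).1
      have hxF' := (Submodule.mem_inf.mp hx).2
      have hxM : x ∈ (Z ⊓ M : Submodule (ZMod 2) V) :=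
        Submodule.mem_inf.mpr ⟨hxZ, hF'M hxF'⟩
      exact Submodule.mem_inf.mpr ⟨hxZ, Submodule.mem_inf.mpr ⟨hcase hxM, hxF'⟩⟩
    rw [e1, e2, hZMd]
    exact ⟨finrank (ZMod 2) (Z ⊓ (F ⊓ F') : Submodule (ZMod 2) V), by ring⟩
  · have e1 : (Z ⊓ F' : Submodule (ZMod 2) V) = Z ⊓ M :=
      le_antisymm (inf_le_inf_left Z hF'M) (le_inf inf_le_left hcase)
    have e2 : (Z ⊓ F : Submodule (ZMod 2) V) = Z ⊓ (F ⊓ F') := by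
      refine le_antisymm ?_ (inf_le_inf_left Z inf_le_left)
      intro x hx
      have hxZ := (Submodule.mem_inf.mp hx).1
      have hxF := (Submodule.mem_inf.mp hx).2
      have hxM : x ∈ (Z ⊓ M : Submodule (ZMod 2) V) :=
        Submodule.mem_inf.mpr ⟨hxZ, hFM hxF⟩
      exact Submodule.mem_inf.mpr ⟨hxZ, Submodule.mem_inf.mpr ⟨hxF, hcase hxM⟩⟩
    rw [e1, e2, hZMd]
    exact ⟨finrank (ZMod 2) (Z ⊓ (F ⊓ F') : Submodule (ZMod 2) V), by ring⟩

include hdim hnd in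
lemma move {A B : Submodule (ZMod 2) V} (hA : MTS Q n A) (hB : MTS Q n B) (hne : A ≠ B) :
    ∃ C, MTS Q n C ∧ finrank (ZMod 2) (B ⊓ C : Submodule (ZMod 2) V) = n - 1 ∧
      finrank (ZMod 2) (A ⊓ B : Submodule (ZMod 2) V) <
        finrank (ZMod 2) (A ⊓ C : Submodule (ZMod 2) V) := by
  have hAnleB : ¬ A ≤ B := fun h =>
    hne (Submodule.eq_of_le_of_finrank_le h (le_of_eq (hB.1.trans hA.1.symm)))
  obtain ⟨v, hvA, hvB⟩ := SetLike.not_le_iff_exists.mp hAnleB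
  have hvne : v ≠ 0 := by rintro rfl; exact hvB (Submodule.zero_mem _)
  set P := perp Q (Submodule.span (ZMod 2) {v}) with hP
  have hPdim : finrank (ZMod 2) P = 2 * n - 1 := by
    rw [hP, finrank_perp hdim hnd, finrank_span_singleton hvne]
  have hBnleP : ¬ B ≤ P := by
    intro h
    have hvmem : v ∈ perp Q B := by
      rw [mem_perp_iff]
      intro b hb
      have := h hb
      rw [mem_perp_iff] at this
      have := this v (Submodule.mem_span_singleton_self v)
      rwa [polarBilin_symm]
    rw [mts_perp_self hdim hnd hB] at hvmem
    exact hvB hvmem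
  have hBPd : finrank (ZMod 2) (B ⊓ P : Submodule (ZMod 2) V) = n - 1 := by
    have hlt : (B ⊓ P : Submodule (ZMod 2) V) < B := by
      refine lt_of_le_of_ne inf_le_left (fun h => hBnleP ?_)
      rw [← h]; exact inf_le_right
    have hub := Submodule.finrank_lt_finrank_of_lt hlt
    rw [hB.1] at hub
    have hsup := Submodule.finrank_sup_add_finrank_inf_eq B P
    have hsuple : finrank (ZMod 2) ((B ⊔ P) : Submodule (ZMod 2) V) ≤ 2 * n := by
      rw [← hdim]; exact Submodule.finrank_le _
    rw [hB.1, hPdim] at hsup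
    omega
  set C := (B ⊓ P) ⊔ (Submodule.span (ZMod 2) {v}) with hC
  have hvperp : ∀ x : V, Q.polarBilin v x = 0 → x ∈ P := by
    intro x hx
    rw [hP, mem_perp_iff]
    intro u hu
    obtain ⟨c, rfl⟩ := Submodule.mem_span_singleton.mp hu
    rw [map_smul, LinearMap.smul_apply, hx, smul_zero]
  have hCts : ∀ x ∈ C, Q x = 0 := by
    intro x hx
    rw [hC] at hx
    obtain ⟨b, hb, w, hw, rfl⟩ := Submodule.mem_sup.mp hx
    obtain ⟨c, rfl⟩ := Submodule.mem_span_singleton.mp hw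
    have hbB := (Submodule.mem_inf.mp hb).1
    have hbP := (Submodule.mem_inf.mp hb).2
    rw [q_add, hB.2 b hbB]
    have h1 : Q (c • v) = 0 := by
      rw [QuadraticMap.map_smul, hA.2 v hvA, smul_zero]
    have h2 : Q.polarBilin b (c • v) = 0 := by
      rw [mem_perp_iff] at hbP
      have := hbP v (Submodule.mem_span_singleton_self v)
      rw [map_smul, polarBilin_symm, this, smul_zero]
    rw [h1, h2]
    ring
  have hdisj : ((B ⊓ P) ⊓ (Submodule.span (ZMod 2) {v}) : Submodule (ZMod 2) V) = ⊥ := by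
    rw [Submodule.eq_bot_iff]
    intro x hx
    obtain ⟨hx1, hx2⟩ := Submodule.mem_inf.mp hx
    obtain ⟨c, rfl⟩ := Submodule.mem_span_singleton.mp hx2
    have hc : c = 0 ∨ c = 1 := by
      have : ∀ d : ZMod 2, d = 0 ∨ d = 1 := by decide
      exact this c
    rcases hc with rfl | rfl
    · simp
    · exfalso
      rw [one_smul] at hx1
      exact hvB (Submodule.mem_inf.mp hx1).1
  have hCdim : finrank (ZMod 2) C = n := by
    have := Submodule.finrank_sup_add_finrank_inf_eq (B ⊓ P) (Submodule.span (ZMod 2) {v})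
    rw [hdisj, hBPd, finrank_span_singleton hvne, finrank_bot] at this
    have hn0 : 0 < n := by
      by_contra h
      push_neg at h
      interval_cases n
      have : finrank (ZMod 2) A = 0 := hA.1
      rw [Submodule.finrank_eq_zero] at this
      rw [this] at hvA
      exact hvne hvA
    rw [hC]
    omega
  have hCmts : MTS Q n C := ⟨hCdim, hCts⟩
  have hvC : v ∈ C := by
    rw [hC]
    exact Submodule.mem_sup_right (Submodule.mem_span_singleton_self v)
  have hBC : finrank (ZMod 2) (B ⊓ C : Submodule (ZMod 2) V) = n - 1 := by
    have hge : (B ⊓ P : Submodule (ZMod 2) V) ≤ B ⊓ C :=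
      le_inf inf_le_left (le_sup_left.trans (le_of_eq hC.symm))
    have h1 := Submodule.finrank_mono hge
    have h2 : finrank (ZMod 2) (B ⊓ C : Submodule (ZMod 2) V) ≤ n := by
      have := Submodule.finrank_mono (inf_le_left : (B ⊓ C : Submodule (ZMod 2) V) ≤ B)
      rw [hB.1] at this
      exact this
    have h3 : finrank (ZMod 2) (B ⊓ C : Submodule (ZMod 2) V) ≠ n := by
      intro h
      have : (B ⊓ C : Submodule (ZMod 2) V) = B :=
        Submodule.eq_of_le_of_finrank_le inf_le_left (by rw [h, hB.1])
      have hBleC : B ≤ C := by rw [← this]; exact inf_le_right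
      have : B = C := Submodule.eq_of_le_of_finrank_le hBleC (by rw [hCdim, hB.1])
      rw [this] at hvB
      exact hvB hvC
    omega
  refine ⟨C, hCmts, hBC, ?_⟩
  have hle : (A ⊓ B : Submodule (ZMod 2) V) ≤ A ⊓ C := by
    intro x hx
    obtain ⟨hxA, hxB⟩ := Submodule.mem_inf.mp hx
    have hxP : x ∈ P := hvperp x (polar_eq_zero_on hA.2 hvA hxA)
    exact Submodule.mem_inf.mpr ⟨hxA,
      Submodule.mem_sup_left (Submodule.mem_inf.mpr ⟨hxB, hxP⟩)⟩
  have hltAB : (A ⊓ B : Submodule (ZMod 2) V) < A ⊓ C := by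
    rw [SetLike.lt_iff_le_and_exists]
    exact ⟨hle, v, Submodule.mem_inf.mpr ⟨hvA, hvC⟩, fun h => hvB (Submodule.mem_inf.mp h).2⟩
  exact Submodule.finrank_lt_finrank_of_lt hltAB

include hdim hnd in
lemma parity_invariant : ∀ k : ℕ, ∀ A B Z₁ Z₂ : Submodule (ZMod 2) V,
    MTS Q n A → MTS Q n B → MTS Q n Z₁ → MTS Q n Z₂ → 0 < n →
    n - finrank (ZMod 2) (A ⊓ B : Submodule (ZMod 2) V) ≤ k →
    Even (finrank (ZMod 2) (Z₁ ⊓ A : Submodule (ZMod 2) V) +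
      finrank (ZMod 2) (Z₁ ⊓ B : Submodule (ZMod 2) V) +
      finrank (ZMod 2) (Z₂ ⊓ A : Submodule (ZMod 2) V) +
      finrank (ZMod 2) (Z₂ ⊓ B : Submodule (ZMod 2) V)) := by
  intro k
  induction k with
  | zero =>
    intro A B Z₁ Z₂ hA hB hZ1 hZ2 hn hk
    have hABle : finrank (ZMod 2) (A ⊓ B : Submodule (ZMod 2) V) ≤ n := by
      have := Submodule.finrank_mono (inf_le_left : (A ⊓ B : Submodule (ZMod 2) V) ≤ A)
      rw [hA.1] at this; exact this
    have hfr : finrank (ZMod 2) (A ⊓ B : Submodule (ZMod 2) V) = n := by omega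
    have hABeq : A = B := by
      have h1 : (A ⊓ B : Submodule (ZMod 2) V) = A :=
        Submodule.eq_of_le_of_finrank_le inf_le_left (by rw [hfr, hA.1])
      have h2 : A ≤ B := by rw [← h1]; exact inf_le_right
      exact Submodule.eq_of_le_of_finrank_le h2 (by rw [hA.1, hB.1])
    subst hABeq
    exact ⟨finrank (ZMod 2) (Z₁ ⊓ A : Submodule (ZMod 2) V) +
      finrank (ZMod 2) (Z₂ ⊓ A : Submodule (ZMod 2) V), by ring⟩
  | succ k ih =>
    intro A B Z₁ Z₂ hA hB hZ1 hZ2 hn hk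
    by_cases hc : n - finrank (ZMod 2) (A ⊓ B : Submodule (ZMod 2) V) ≤ k
    · exact ih A B Z₁ Z₂ hA hB hZ1 hZ2 hn hc
    have hne : A ≠ B := by
      rintro rfl
      rw [inf_idem, hA.1] at hc
      omega
    obtain ⟨C, hC, hBC, hlt⟩ := move hdim hnd hA hB hne
    have h1 := ih A C Z₁ Z₂ hA hC hZ1 hZ2 hn (by omega)
    have hBCcap : finrank (ZMod 2) (B ⊓ C : Submodule (ZMod 2) V) = n - 1 := hBC
    have h2 := step_parity hdim hnd hB hC hZ1 hBCcap hn
    have h3 := step_parity hdim hnd hB hC hZ2 hBCcap hn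
    obtain ⟨r, hr⟩ := h1
    obtain ⟨p, hp⟩ := h2
    obtain ⟨q, hq⟩ := h3
    exact Nat.even_iff.mpr (by omega)

end OrthDHO


/-- If a dual hyperoval of rank `n` over `F₂` has all members totally singular
with respect to a plus-type quadratic form on a `2n`-dimensional space, then
`n` is odd. -/
theorem orthogonal_DHO_rank_odd
    (n : ℕ) (hn : 2 < n)
    (V : Type*) [AddCommGroup V] [Module (ZMod 2) V] [FiniteDimensional (ZMod 2) V]
    (hdim : Module.finrank (ZMod 2) V = 2 * n)
    (Q : QuadraticForm (ZMod 2) V)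
    (hnd : (QuadraticMap.polarBilin Q).Nondegenerate)
    -- plus type: Witt index `n`, witnessed by a totally singular `n`-space
    (W : Submodule (ZMod 2) V)
    (hW : Module.finrank (ZMod 2) W = n ∧ ∀ x ∈ W, Q x = 0)
    (D : Set (Submodule (ZMod 2) V))
    (hcard : D.ncard = 2 ^ n)
    (hmem : ∀ X ∈ D, Module.finrank (ZMod 2) X = n ∧ ∀ x ∈ X, Q x = 0)
    (hspan : sSup D = ⊤)
    (h2 : ∀ X₁ ∈ D, ∀ X₂ ∈ D, X₁ ≠ X₂ →
      Module.finrank (ZMod 2) (X₁ ⊓ X₂ : Submodule (ZMod 2) V) = 1)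
    (h3 : ∀ X₁ ∈ D, ∀ X₂ ∈ D, ∀ X₃ ∈ D,
      X₁ ≠ X₂ → X₁ ≠ X₃ → X₂ ≠ X₃ → X₁ ⊓ X₂ ⊓ X₃ = ⊥) :
    Odd n := by
  have hndf : LinearMap.BilinForm.Nondegenerate
      (Q.polarBilin : LinearMap.BilinForm (ZMod 2) V) := hnd
  have hVfin : Finite V := Module.finite_of_finite (ZMod 2)
  have hSubFin : Finite (Submodule (ZMod 2) V) :=
    Finite.of_injective (fun (p : Submodule (ZMod 2) V) => (p : Set V)) SetLike.coe_injective
  have hDfin : D.Finite := Set.toFinite D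
  have h3card : 2 < D.ncard := by
    rw [hcard]
    calc 2 < 2 ^ 2 := by norm_num
    _ ≤ 2 ^ n := Nat.pow_le_pow_right (by norm_num) (by omega)
  obtain ⟨A, hAD, B, hBD, Z, hZD, hAB, hAZ, hBZ⟩ := (Set.two_lt_ncard hDfin).mp h3card
  have hA : OrthDHO.MTS Q n A := ⟨(hmem A hAD).1, (hmem A hAD).2⟩
  have hB : OrthDHO.MTS Q n B := ⟨(hmem B hBD).1, (hmem B hBD).2⟩
  have hZ : OrthDHO.MTS Q n Z := ⟨(hmem Z hZD).1, (hmem Z hZD).2⟩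
  have hn0 : 0 < n := by omega
  have key := OrthDHO.parity_invariant hdim hndf n A B B Z hA hB hB hZ hn0 (Nat.sub_le _ _)
  have fBA : Module.finrank (ZMod 2) (B ⊓ A : Submodule (ZMod 2) V) = 1 :=
    h2 B hBD A hAD (Ne.symm hAB)
  have fBB : Module.finrank (ZMod 2) (B ⊓ B : Submodule (ZMod 2) V) = n := by
    rw [inf_idem]; exact hB.1
  have fZA : Module.finrank (ZMod 2) (Z ⊓ A : Submodule (ZMod 2) V) = 1 :=
    h2 Z hZD A hAD (Ne.symm hAZ)
  have fZB : Module.finrank (ZMod 2) (Z ⊓ B : Submodule (ZMod 2) V) = 1 :=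
    h2 Z hZD B hBD (Ne.symm hBZ)
  rw [fBA, fBB, fZA, fZB, Nat.even_iff] at key
  rw [Nat.odd_iff]
  omega
end

section
/- Let V = F_2^{2n} carry a quadratic form Q of plus type, and let D be an orthogonal dual hyperoval of rank n in V (all members totally singular) that splits over a totally singular n-dimensional subspace Y (i.e., V = X ⊕ Y for every X ∈ D). Then the set of singular vectors of V equals (∪_{X∈D} X) ∪ Y; in particular Y is the unique totally singular subspace over which D splits. -/
/-- If an orthogonal dual hyperoval `D` of rank `n` in `V⁺(2n,2)` splits over
a totally singular subspace `Y`, then the singular vectors of `V` are exactly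
`(⋃ D) ∪ Y`; in particular `Y` is the unique totally singular subspace over
which `D` splits. -/
theorem orthogonal_DHO_split_singular_set
    (n : ℕ) (hn : 2 < n)
    (V : Type*) [AddCommGroup V] [Module (ZMod 2) V] [FiniteDimensional (ZMod 2) V]
    (hdim : Module.finrank (ZMod 2) V = 2 * n)
    (Q : QuadraticForm (ZMod 2) V)
    (hnd : (QuadraticMap.polarBilin Q).Nondegenerate)
    (D : Set (Submodule (ZMod 2) V))
    (hcard : D.ncard = 2 ^ n)
    (hmem : ∀ X ∈ D, Module.finrank (ZMod 2) X = n ∧ ∀ x ∈ X, Q x = 0)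
    (h2 : ∀ X₁ ∈ D, ∀ X₂ ∈ D, X₁ ≠ X₂ →
      Module.finrank (ZMod 2) (X₁ ⊓ X₂ : Submodule (ZMod 2) V) = 1)
    (h3 : ∀ X₁ ∈ D, ∀ X₂ ∈ D, ∀ X₃ ∈ D,
      X₁ ≠ X₂ → X₁ ≠ X₃ → X₂ ≠ X₃ → X₁ ⊓ X₂ ⊓ X₃ = ⊥)
    (Y : Submodule (ZMod 2) V)
    (hYsing : ∀ y ∈ Y, Q y = 0) (hYdim : Module.finrank (ZMod 2) Y = n)
    (hsplit : ∀ X ∈ D, IsCompl X Y) :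
    {v : V | Q v = 0} = (⋃ X ∈ D, (X : Set V)) ∪ (Y : Set V) ∧
    ∀ Y' : Submodule (ZMod 2) V, (∀ y ∈ Y', Q y = 0) →
      (∀ X ∈ D, IsCompl X Y') → Y' = Y := by
  classical
  have hfinV : Finite V := Module.finite_of_finite (ZMod 2)
  letI : Fintype V := Fintype.ofFinite V
  have hDfin : D.Finite := Set.finite_of_ncard_ne_zero (by rw [hcard]; positivity)
  -- polar form vanishes on pairs from a totally singular subspace
  have hpolar : ∀ (W : Submodule (ZMod 2) V), (∀ w ∈ W, Q w = 0) →
      ∀ a ∈ W, ∀ b ∈ W, QuadraticMap.polar Q a b = 0 := by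
    intro W hW a ha b hb
    simp [QuadraticMap.polar, hW _ ha, hW _ hb, hW _ (W.add_mem ha hb)]
  -- the key fiber lemma
  have key : ∀ X ∈ D, ∀ x, x ∈ X → x ≠ 0 → ∀ v : V, Q v = 0 → v - x ∈ Y →
      v ∈ ⋃ X' ∈ D, (X' : Set V) := by
    intro X hX x hxX hx0 v hv hvY
    by_contra hvD
    have hXY := hsplit X hX
    have hQX := (hmem X hX).2
    -- v ≠ x and v ≠ 0-shift facts
    have hvx : v ≠ x := by
      rintro rfl
      exact hvD (Set.mem_biUnion hX hxX)
    -- the linear functional y ↦ polar x y is nonzero on Y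
    have hfun : ∃ y ∈ Y, QuadraticMap.polar Q x y ≠ 0 := by
      by_contra h
      push_neg at h
      apply hx0
      apply hnd.1
      intro w
      have hw : w ∈ X ⊔ Y := by rw [hXY.sup_eq_top]; trivial
      obtain ⟨a, ha, b, hb, rfl⟩ := Submodule.mem_sup.mp hw
      rw [map_add]
      simp only [QuadraticMap.polarBilin_apply_apply]
      rw [hpolar X hQX x hxX a ha, h b hb, add_zero]
    obtain ⟨y', hy'Y, hy'⟩ := hfun
    -- the subspace K = {y ∈ Y : polar x y = 0} is a proper subspace of Y
    set K : Submodule (ZMod 2) V := Y ⊓ LinearMap.ker (QuadraticMap.polarBilin Q x) with hK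
    have hKY : K < Y := by
      refine lt_of_le_of_ne inf_le_left ?_
      intro hEq
      have : y' ∈ K := hEq ▸ hy'Y
      exact hy' (by simpa [hK, QuadraticMap.polarBilin_apply_apply] using this.2)
    have hKrank : Module.finrank (ZMod 2) K < n := by
      rw [← hYdim]; exact Submodule.finrank_lt_finrank_of_lt hKY
    have hKcard : Fintype.card K ≤ 2 ^ (n - 1) := by
      rw [Module.card_eq_pow_finrank (K := ZMod 2)]
      have : Fintype.card (ZMod 2) = 2 := by decide
      rw [this]
      exact Nat.pow_le_pow_right (by norm_num) (by omega)
    -- the singular fiber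
    set SF : Finset V := Finset.univ.filter (fun w => Q w = 0 ∧ w - x ∈ Y) with hSF
    have hSFcard : SF.card ≤ 2 ^ (n - 1) := by
      have hsub : SF ⊆ Finset.image (fun k : K => x + (k : V)) Finset.univ := by
        intro w hw
        rw [hSF, Finset.mem_filter] at hw
        obtain ⟨-, hw1, hw2⟩ := hw
        have hwx : w - x ∈ K := by
          refine Submodule.mem_inf.mpr ⟨hw2, ?_⟩
          rw [LinearMap.mem_ker, QuadraticMap.polarBilin_apply_apply]
          have : QuadraticMap.polar Q x (w - x) = Q w - Q x - Q (w - x) := by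
            simp only [QuadraticMap.polar, show x + (w - x) = w from by abel]
          rw [this, hw1, hQX x hxX, hYsing _ hw2]
          ring
        refine Finset.mem_image.mpr ⟨⟨w - x, hwx⟩, Finset.mem_univ _, by show x + (w - x) = w; abel⟩
      calc SF.card ≤ _ := Finset.card_le_card hsub
        _ ≤ (Finset.univ : Finset K).card := Finset.card_image_le
        _ ≤ 2 ^ (n - 1) := by rw [Finset.card_univ]; exact hKcard
    -- the projection of x into each member of D along Y
    set g : Submodule (ZMod 2) V → V := fun X' =>
      if h : IsCompl X' Y then ((X'.linearProjOfIsCompl Y h) x : V) else 0 with hg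
    have hgmem : ∀ X' ∈ D, g X' ∈ X' ∧ x - g X' ∈ Y := by
      intro X' hX'
      have h' := hsplit X' hX'
      rw [hg]
      simp only [dif_pos h']
      refine ⟨Submodule.coe_mem _, ?_⟩
      have h2' := sub_eq_of_eq_add'
        (show ((X'.linearProjOfIsCompl Y h') x : V) + (Y.linearProjOfIsCompl X' h'.symm x : V) = x from
          Submodule.projection_add_projection_eq_self h' x).symm
      rw [h2']
      exact Submodule.coe_mem _
    set Dfin : Finset (Submodule (ZMod 2) V) := hDfin.toFinset.erase X with hDf
    have hDcard : Dfin.card = 2 ^ n - 1 := by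
      rw [hDf, Finset.card_erase_of_mem (hDfin.mem_toFinset.mpr hX),
        show hDfin.toFinset.card = D.ncard from (Set.ncard_eq_toFinset_card D hDfin).symm,
        hcard]
    -- g maps Dfin into SF
    have hgSF : ∀ X' ∈ Dfin, g X' ∈ SF := by
      intro X' hX'
      have hX'D : X' ∈ D := hDfin.mem_toFinset.mp (Finset.mem_of_mem_erase hX')
      obtain ⟨hg1, hg2⟩ := hgmem X' hX'D
      rw [hSF, Finset.mem_filter]
      exact ⟨Finset.mem_univ _, (hmem X' hX'D).2 _ hg1,
        by simpa using Y.neg_mem hg2⟩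
    have hcount := Finset.card_eq_sum_card_fiberwise hgSF
    -- multiplicity bounds
    have hmult2 : ∀ w ∈ SF, (Dfin.filter (fun X' => g X' = w)).card ≤ 2 := by
      intro w hw
      by_contra h
      push_neg at h
      obtain ⟨a, ha, b, hb, c, hc, hab, hac, hbc⟩ := Finset.two_lt_card.mp h
      have hmemD : ∀ Z ∈ Dfin.filter (fun X' => g X' = w), Z ∈ D ∧ w ∈ Z := by
        intro Z hZ
        rw [Finset.mem_filter] at hZ
        have hZD : Z ∈ D := hDfin.mem_toFinset.mp (Finset.mem_of_mem_erase hZ.1)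
        exact ⟨hZD, hZ.2 ▸ (hgmem Z hZD).1⟩
      obtain ⟨haD, haw⟩ := hmemD a ha
      obtain ⟨hbD, hbw⟩ := hmemD b hb
      obtain ⟨hcD, hcw⟩ := hmemD c hc
      have h0 := h3 a haD b hbD c hcD hab hac hbc
      have hw0 : w ∈ (⊥ : Submodule (ZMod 2) V) := h0 ▸
        Submodule.mem_inf.mpr ⟨Submodule.mem_inf.mpr ⟨haw, hbw⟩, hcw⟩
      -- but w ≠ 0
      have hwx : w - x ∈ Y := by
        rw [hSF, Finset.mem_filter] at hw; exact hw.2.2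
      rw [Submodule.mem_bot] at hw0
      subst hw0
      have : x ∈ Y := by simpa using Y.neg_mem hwx
      exact hx0 (Submodule.disjoint_def.mp hXY.disjoint x hxX this)
    have hmultx : (Dfin.filter (fun X' => g X' = x)).card ≤ 1 := by
      by_contra h
      push_neg at h
      obtain ⟨a, ha, b, hb, hab⟩ := Finset.one_lt_card.mp h
      rw [Finset.mem_filter] at ha hb
      have haD : a ∈ D := hDfin.mem_toFinset.mp (Finset.mem_of_mem_erase ha.1)
      have hbD : b ∈ D := hDfin.mem_toFinset.mp (Finset.mem_of_mem_erase hb.1)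
      have haX : a ≠ X := Finset.ne_of_mem_erase ha.1
      have hbX : b ≠ X := Finset.ne_of_mem_erase hb.1
      have h0 := h3 X hX a haD b hbD (Ne.symm haX) (Ne.symm hbX) hab
      have hxa : x ∈ a := ha.2 ▸ (hgmem a haD).1
      have hxb : x ∈ b := hb.2 ▸ (hgmem b hbD).1
      have : x ∈ (⊥ : Submodule (ZMod 2) V) := h0 ▸
        Submodule.mem_inf.mpr ⟨Submodule.mem_inf.mpr ⟨hxX, hxa⟩, hxb⟩
      exact hx0 (Submodule.mem_bot _ |>.mp this)
    have hmultv : (Dfin.filter (fun X' => g X' = v)).card = 0 := by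
      rw [Finset.card_eq_zero]
      rw [Finset.filter_eq_empty_iff]
      intro Z hZ h
      have hZD : Z ∈ D := hDfin.mem_toFinset.mp (Finset.mem_of_mem_erase hZ)
      exact hvD (Set.mem_biUnion hZD (h ▸ (hgmem Z hZD).1))
    have hxSF : x ∈ SF := by
      rw [hSF, Finset.mem_filter]
      exact ⟨Finset.mem_univ _, hQX x hxX, by simp⟩
    have hvSF : v ∈ SF := by
      rw [hSF, Finset.mem_filter]
      exact ⟨Finset.mem_univ _, hv, hvY⟩
    -- assemble the counting contradiction
    set f : V → ℕ := fun w => (Dfin.filter (fun X' => g X' = w)).card with hf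
    have hsum1 : ∑ w ∈ SF, f w = ∑ w ∈ SF.erase v, f w := by
      exact (Finset.sum_erase SF (f := f) (a := v) hmultv).symm
    have hxSF' : x ∈ SF.erase v := Finset.mem_erase.mpr ⟨Ne.symm hvx, hxSF⟩
    have hsum2 : ∑ w ∈ SF.erase v, f w
        = f x + ∑ w ∈ (SF.erase v).erase x, f w := by
      rw [← Finset.add_sum_erase _ f hxSF']
    have hsum3 : ∑ w ∈ (SF.erase v).erase x, f w ≤ 2 * ((SF.erase v).erase x).card := by
      rw [mul_comm]
      refine Finset.sum_le_card_nsmul _ _ 2 ?_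
      intro w hw
      exact hmult2 w (Finset.mem_of_mem_erase (Finset.mem_of_mem_erase hw))
    have hcardE : ((SF.erase v).erase x).card = SF.card - 2 := by
      rw [Finset.card_erase_of_mem hxSF', Finset.card_erase_of_mem hvSF]
      omega
    have hSF2 : 2 ≤ SF.card := by
      have := Finset.card_le_card (show {v, x} ⊆ SF by
        intro w hw
        rcases Finset.mem_insert.mp hw with rfl | hw
        · exact hvSF
        · rw [Finset.mem_singleton] at hw; subst hw; exact hxSF)
      simpa [Finset.card_insert_of_notMem, hvx] using this
    have hfinal : 2 ^ n - 1 ≤ 1 + 2 * (2 ^ (n - 1) - 2) := by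
      calc 2 ^ n - 1 = Dfin.card := hDcard.symm
        _ = ∑ w ∈ SF, f w := hcount
        _ = f x + ∑ w ∈ (SF.erase v).erase x, f w := by rw [hsum1, hsum2]
        _ ≤ 1 + 2 * (SF.card - 2) := by
            have := hsum3
            rw [hcardE] at this
            exact Nat.add_le_add hmultx this
        _ ≤ 1 + 2 * (2 ^ (n - 1) - 2) := by
            have : SF.card - 2 ≤ 2 ^ (n - 1) - 2 := Nat.sub_le_sub_right hSFcard 2
            omega
    have hpow : 2 ^ n = 2 ^ (n - 1) * 2 := by
      rw [← pow_succ]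
      congr 1
      omega
    have h4 : 4 ≤ 2 ^ (n - 1) := by
      calc (4 : ℕ) = 2 ^ 2 := by norm_num
        _ ≤ 2 ^ (n - 1) := Nat.pow_le_pow_right (by norm_num) (by omega)
    omega
  -- main equality
  have hMain : {v : V | Q v = 0} = (⋃ X ∈ D, (X : Set V)) ∪ (Y : Set V) := by
    apply Set.eq_of_subset_of_subset
    · intro v hv
      obtain ⟨X₀, hX₀⟩ := Set.nonempty_of_ncard_ne_zero (by rw [hcard]; positivity : D.ncard ≠ 0)
      have h₀ := hsplit X₀ hX₀
      set x : V := ((X₀.linearProjOfIsCompl Y h₀) v : V) with hx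
      have hxX : x ∈ X₀ := Submodule.coe_mem _
      have hvx : v - x ∈ Y := by
        have h' := sub_eq_of_eq_add'
          (show ((X₀.linearProjOfIsCompl Y h₀) v : V) + (Y.linearProjOfIsCompl X₀ h₀.symm v : V) = v from
            Submodule.projection_add_projection_eq_self h₀ v).symm
        rw [← hx] at h'
        rw [h']; exact Submodule.coe_mem _
      by_cases hx0 : x = 0
      · right
        have : v = v - x := by rw [hx0]; abel
        rw [SetLike.mem_coe, this]; exact hvx
      · left
        exact key X₀ hX₀ x hxX hx0 v hv hvx
    · intro v hv
      rcases hv with hv | hv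
      · simp only [Set.mem_iUnion, SetLike.mem_coe, exists_prop] at hv
        obtain ⟨S, hSD, hvS⟩ := hv
        exact (hmem S hSD).2 v hvS
      · exact hYsing v hv
  refine ⟨hMain, ?_⟩
  -- uniqueness of Y
  intro Y' hY'sing hY'split
  obtain ⟨X₀, hX₀⟩ := Set.nonempty_of_ncard_ne_zero (by rw [hcard]; positivity : D.ncard ≠ 0)
  have hY'dim : Module.finrank (ZMod 2) Y' = n := by
    have h1 := Submodule.finrank_add_eq_of_isCompl (hY'split X₀ hX₀)
    rw [hdim, (hmem X₀ hX₀).1] at h1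
    omega
  have hle : Y' ≤ Y := by
    intro y hy
    have hyQ : Q y = 0 := hY'sing y hy
    have : y ∈ (⋃ X ∈ D, (X : Set V)) ∪ (Y : Set V) := hMain ▸ hyQ
    rcases this with h | h
    · obtain ⟨S, hS⟩ := Set.mem_iUnion.mp h
      simp only [Set.mem_iUnion, SetLike.mem_coe, exists_prop] at hS
      obtain ⟨hSD, hyS⟩ := hS
      have : y = 0 :=
        Submodule.disjoint_def.mp (hY'split S hSD).disjoint y hyS hy
      rw [this]; exact Y.zero_mem
    · exact h
  exact Submodule.eq_of_le_of_finrank_eq hle (by rw [hY'dim, hYdim])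
end

section
/- Let U be an F_q-space of finite dimension with q even and b a nondegenerate symmetric bilinear form. For every self-adjoint operator T on U there exists a unique self-adjoint operator R = E_{a,a} of rank at most 1 such that T + R is skew-symmetric (i.e., b(x, x(T+R)) = 0 for all x). Moreover b(x, xT) = b(x,a)^2 for all x ∈ U. -/
/-- The rank-one operator `x ↦ b(x,a) • c`. -/
def Eop {F U : Type*} [Field F] [AddCommGroup U] [Module F U]
    (B : LinearMap.BilinForm F U) (a c : U) : U →ₗ[F] U :=
  (B.flip a).smulRight c

/-- `T` is self-adjoint with respect to `B`. -/
def IsSelfAdjOp {F U : Type*} [Field F] [AddCommGroup U] [Module F U]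
    (B : LinearMap.BilinForm F U) (T : U →ₗ[F] U) : Prop :=
  ∀ x y : U, B (T x) y = B x (T y)

/-- `T` is skew-symmetric (alternating) with respect to `B`. -/
def IsSkewOp {F U : Type*} [Field F] [AddCommGroup U] [Module F U]
    (B : LinearMap.BilinForm F U) (T : U →ₗ[F] U) : Prop :=
  ∀ x : U, B x (T x) = 0

section Aux
variable {F U : Type*} [Field F] [Fintype F] [CharP F 2]
    [AddCommGroup U] [Module F U] [FiniteDimensional F U]

noncomputable def mysqrt (F : Type*) [Field F] [Fintype F] [CharP F 2] : F → F :=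
  (frobeniusEquiv F 2).symm

lemma mysqrt_sq (x : F) : (mysqrt F x) ^ 2 = x := by
  have := frobenius_apply_frobeniusEquiv_symm F 2 x
  rwa [frobenius_def] at this

lemma sq_mysqrt (x : F) : mysqrt F (x ^ 2) = x := by
  have := frobeniusEquiv_symm_apply_frobenius F 2 x
  rwa [frobenius_def] at this

lemma sq_inj {x y : F} (h : x ^ 2 = y ^ 2) : x = y := by
  have := congrArg (mysqrt F) h
  rwa [sq_mysqrt, sq_mysqrt] at this

omit [Fintype F] [CharP F 2] [FiniteDimensional F U] in
lemma Eop_apply (B : LinearMap.BilinForm F U) (a c x : U) :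
    Eop B a c x = (B x a) • c := rfl

end Aux

/-- For every self-adjoint `T` there is a unique self-adjoint operator
`R = E_{a,a}` of rank at most 1 such that `T + R` is skew-symmetric; moreover
`B x (T x) = B x a ^ 2` for all `x`. -/
theorem exists_unique_rank_one_correction
    (F U : Type*) [Field F] [Fintype F] [CharP F 2]
    [AddCommGroup U] [Module F U] [FiniteDimensional F U]
    (B : LinearMap.BilinForm F U) (hsymm : B.IsSymm) (hnd : B.Nondegenerate)
    (T : U →ₗ[F] U) (hT : IsSelfAdjOp B T) :
    ∃ a : U, IsSkewOp B (T + Eop B a a) ∧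
      (∀ x : U, B x (T x) = B x a ^ 2) ∧
      Module.finrank F (LinearMap.range (Eop B a a)) ≤ 1 ∧
      ∀ R : U →ₗ[F] U, IsSelfAdjOp B R →
        Module.finrank F (LinearMap.range R) ≤ 1 →
        IsSkewOp B (T + R) → R = Eop B a a := by
  have hsy : ∀ x y : U, B x y = B y x := fun x y => by
    have := hsymm.eq y x; simpa using this.symm
  -- nondegeneracy on the right
  have hndr : ∀ m : U, (∀ n : U, B n m = 0) → m = 0 := by
    intro m hm
    exact hnd.1 m (fun n => by rw [hsy]; exact hm n)
  -- q is Frobenius-semilinear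
  have hq_add : ∀ x y : U, B (x + y) (T (x + y)) = B x (T x) + B y (T y) := by
    intro x y
    have h1 : B x (T y) + B y (T x) = 0 := by
      have : B y (T x) = B x (T y) := by rw [hsy, hT]
      rw [this]; exact CharTwo.add_self_eq_zero _
    simp only [map_add, LinearMap.add_apply]
    linear_combination h1
  have hq_smul : ∀ (c : F) (x : U), B (c • x) (T (c • x)) = c ^ 2 * B x (T x) := by
    intro c x
    simp only [map_smul, LinearMap.smul_apply, smul_eq_mul]
    ring
  -- the semilinear functional, made linear via sqrt
  let φ : U →ₗ[F] F :=
    { toFun := fun x => mysqrt F (B x (T x))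
      map_add' := fun x y => by
        show mysqrt F _ = mysqrt F _ + mysqrt F _
        rw [hq_add]
        exact map_add ((frobeniusEquiv F 2).symm : F ≃+* F) _ _
      map_smul' := fun c x => by
        show mysqrt F _ = c * mysqrt F _
        rw [hq_smul]
        have : (c : F) ^ 2 * B x (T x) = (c * mysqrt F (B x (T x))) ^ 2 := by
          rw [mul_pow, mysqrt_sq]
        rw [this, sq_mysqrt] }
  set a : U := (B.toDual hnd).symm φ with ha
  have haB : ∀ x : U, B x a = mysqrt F (B x (T x)) := by
    intro x
    rw [hsy]
    exact LinearMap.BilinForm.apply_toDual_symm_apply (hB := hnd) (f := φ) (v := x)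
  have hmain : ∀ x : U, B x (T x) = B x a ^ 2 := by
    intro x; rw [haB, mysqrt_sq]
  refine ⟨a, ?_, hmain, ?_, ?_⟩
  · -- skew
    intro x
    simp only [LinearMap.add_apply, map_add, Eop_apply, map_smul, smul_eq_mul]
    rw [hmain x, pow_two]
    exact CharTwo.add_self_eq_zero _
  · -- rank ≤ 1
    have hle : LinearMap.range (Eop B a a) ≤ Submodule.span F {a} := by
      rintro _ ⟨x, rfl⟩
      rw [Eop_apply]
      exact Submodule.smul_mem _ _ (Submodule.mem_span_singleton_self a)
    calc Module.finrank F (LinearMap.range (Eop B a a))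
        ≤ Module.finrank F (Submodule.span F {a}) := Submodule.finrank_mono hle
      _ ≤ 1 := le_trans (finrank_span_le_card _) (by simp)
  · -- uniqueness
    intro R hR hrk hskew
    -- B x (R x) = B x a ^ 2
    have hRq : ∀ x : U, B x (R x) = B x a ^ 2 := by
      intro x
      have := hskew x
      simp only [LinearMap.add_apply, map_add] at this
      have h2 : B x (T x) = B x (R x) := by
        have h3 := eq_neg_of_add_eq_zero_left this
        rwa [CharTwo.neg_eq] at h3
      rw [← h2, hmain]
    -- structure of R
    obtain ⟨v, hv⟩ := finrank_le_one_iff.mp hrk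
    set c : U := (v : U) with hc
    have hRx : ∀ x : U, ∃ k : F, R x = k • c := by
      intro x
      obtain ⟨k, hk⟩ := hv ⟨R x, LinearMap.mem_range_self R x⟩
      exact ⟨k, by simpa [hc] using congrArg Subtype.val hk.symm⟩
    by_cases hc0 : c = 0
    · -- R = 0 and a = 0
      have hR0 : R = 0 := by
        ext x
        obtain ⟨k, hk⟩ := hRx x
        simp [hk, hc0]
      have ha0 : a = 0 := by
        apply hndr
        intro n
        have h := hRq n
        rw [hR0] at h
        simp at h
        exact sq_inj (by simpa using h.symm)
      rw [hR0, ha0]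
      ext x
      simp [Eop_apply]
    · -- c ≠ 0
      obtain ⟨y0, hy0⟩ : ∃ y0 : U, B c y0 ≠ 0 := by
        by_contra h
        push_neg at h
        exact hc0 (hnd.1 c h)
      obtain ⟨k0, hk0⟩ := hRx y0
      set lam : F := k0 / B c y0 with hlam
      have hRform : ∀ x : U, R x = (lam * B x c) • c := by
        intro x
        obtain ⟨k, hk⟩ := hRx x
        have hadj := hR x y0
        rw [hk, hk0] at hadj
        simp only [map_smul, LinearMap.smul_apply, smul_eq_mul] at hadj
        -- hadj : k * B c y0 = k0 * B x c
        have : k = lam * B x c := by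
          rw [hlam, div_mul_eq_mul_div, eq_div_iff hy0]
          linear_combination hadj
        rw [hk, this]
      set mu : F := mysqrt F lam with hmu
      have hmusq : mu * mu = lam := by
        have := mysqrt_sq (F := F) lam
        rwa [pow_two] at this
      have hac : a = mu • c := by
        have hBeq : ∀ x : U, B x a = mu * B x c := by
          intro x
          apply sq_inj
          rw [← hRq x, hRform x]
          simp only [map_smul, smul_eq_mul]
          rw [← hmusq]
          ring
        have h0 : a + mu • c = 0 := by
          apply hndr
          intro n
          simp only [map_add, map_smul, smul_eq_mul]
          rw [← hBeq n]
          exact CharTwo.add_self_eq_zero _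
        have h1 := eq_neg_of_add_eq_zero_left h0
        rw [h1, ← neg_one_smul F (mu • c), show (-1 : F) = 1 from CharTwo.neg_eq 1, one_smul]
      ext x
      rw [hRform x, Eop_apply, hac]
      simp only [map_smul, smul_eq_mul]
      rw [← hmusq, smul_smul]
      ring_nf
end

section
/- Let U be an F_q-space (q even) with nondegenerate symmetric bilinear form b, and let T be a self-adjoint operator such that T + E_{a,a} is skew-symmetric. Then a ∈ Im(T), and rk(T + E_{a,a}) equals rk(T) if rk(T) is even, and equals rk(T) ± 1 if rk(T) is odd. -/
open Module Submodule LinearMap.BilinForm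

lemma even_finrank_of_alt_nondeg {K : Type*} [Field K] :
    ∀ (n : ℕ) (V : Type*) [AddCommGroup V] [Module K V] [FiniteDimensional K V],
      Module.finrank K V = n → ∀ (C : LinearMap.BilinForm K V), C.IsAlt → C.Nondegenerate →
        Even n := by
  intro n
  induction n using Nat.strong_induction_on with
  | _ n IH =>
    intro V _ _ _ hdim C halt hnd
    rcases Nat.eq_zero_or_pos n with h0 | hpos
    · simp [h0]
    have : Nontrivial V := by
      rw [← Module.finrank_pos_iff (R := K)]; omega
    obtain ⟨x, hx⟩ := exists_ne (0 : V)
    have hy : ∃ y : V, C x y ≠ 0 := by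
      by_contra h
      push_neg at h
      exact hx (hnd.1 x h)
    obtain ⟨y, hy⟩ := hy
    have hyx : C y x ≠ 0 := by
      intro h
      apply hy
      have := LinearMap.IsAlt.neg halt x y
      rw [h] at this
      rw [← neg_eq_zero, this]
    set W : Submodule K V := Submodule.span K {x, y} with hW
    have hxW : x ∈ W := Submodule.subset_span (by simp)
    have hyW : y ∈ W := Submodule.subset_span (by simp)
    -- restriction nondegenerate
    have hres : (C.restrict W).Nondegenerate := by
      apply (LinearMap.IsRefl.nondegenerate_iff_separatingLeft
        (LinearMap.IsAlt.isRefl (B := C.restrict W) (fun w => halt w))).mpr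
      rintro ⟨w, hw⟩ h
      obtain ⟨s, t, rfl⟩ := Submodule.mem_span_pair.mp hw
      have h1 : s * C x x + t * C y x = 0 := by
        simpa [restrict_apply, smul_eq_mul] using h ⟨x, hxW⟩
      have h2 : s * C x y + t * C y y = 0 := by
        simpa [restrict_apply, smul_eq_mul] using h ⟨y, hyW⟩
      rw [halt x, mul_zero, zero_add] at h1
      rw [halt y, mul_zero, add_zero] at h2
      have ht : t = 0 := by rcases mul_eq_zero.mp h1 with h | h; exacts [h, absurd h hyx]
      have hs : s = 0 := by rcases mul_eq_zero.mp h2 with h | h; exacts [h, absurd h hy]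
      ext
      simp [ht, hs]
    have hrefl : C.IsRefl := LinearMap.IsAlt.isRefl halt
    have hWdim : finrank K W = 2 := by
      have hli : LinearIndependent K ![x, y] := by
        rw [LinearIndependent.pair_iff]
        intro s t hst
        have e1 : C (s • x + t • y) x = 0 := by rw [hst]; simp
        have e2 : C (s • x + t • y) y = 0 := by rw [hst]; simp
        simp only [map_add, map_smul, LinearMap.add_apply, LinearMap.smul_apply,
          smul_eq_mul, halt x, halt y, mul_zero, zero_add, add_zero] at e1 e2
        constructor
        · rcases mul_eq_zero.mp e2 with h | h; exacts [h, absurd h hy]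
        · rcases mul_eq_zero.mp e1 with h | h; exacts [h, absurd h hyx]
      have hcard := finrank_span_eq_card (R := K) hli
      have hset : Set.range ![x, y] = {x, y} := by
        simp [Matrix.range_cons, Matrix.range_empty, Set.pair_comm]
      rw [hset] at hcard
      simpa using hcard
    have hcompl : IsCompl W (C.orthogonal W) :=
      isCompl_orthogonal_of_restrict_nondegenerate hrefl hres
    have hres2 : (C.restrict (C.orthogonal W)).Nondegenerate := by
      apply C.nondegenerate_restrict_of_disjoint_orthogonal hrefl
      rw [orthogonal_orthogonal hnd hrefl]
      exact hcompl.disjoint.symm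
    have halt2 : (C.restrict (C.orthogonal W)).IsAlt := fun w => halt w
    have hOdim : finrank K (C.orthogonal W) = n - 2 := by
      rw [finrank_orthogonal hnd, hdim, hWdim]
    have hn2 : 2 ≤ n := by
      have := finrank_le W
      omega
    have := IH (n - 2) (by omega) (C.orthogonal W) hOdim (C.restrict _) halt2 hres2
    obtain ⟨k, hk⟩ := this
    exact ⟨k + 1, by omega⟩

/-- If `T` is self-adjoint and `T + E_{a,a}` is skew-symmetric, then
`a ∈ Im T`, and the rank of `T + E_{a,a}` is `rk T` when `rk T` is even and
`rk T ± 1` when `rk T` is odd. -/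
theorem rank_of_skew_correction
    (F U : Type*) [Field F] [Fintype F] [CharP F 2]
    [AddCommGroup U] [Module F U] [FiniteDimensional F U]
    (B : LinearMap.BilinForm F U) (hsymm : B.IsSymm) (hnd : B.Nondegenerate)
    (T : U →ₗ[F] U) (hT : IsSelfAdjOp B T)
    (a : U) (hskew : IsSkewOp B (T + Eop B a a)) :
    a ∈ LinearMap.range T ∧
    (Even (Module.finrank F (LinearMap.range T)) →
      Module.finrank F (LinearMap.range (T + Eop B a a)) =
        Module.finrank F (LinearMap.range T)) ∧
    (Odd (Module.finrank F (LinearMap.range T)) →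
      Module.finrank F (LinearMap.range (T + Eop B a a)) =
        Module.finrank F (LinearMap.range T) + 1 ∨
      Module.finrank F (LinearMap.range (T + Eop B a a)) =
        Module.finrank F (LinearMap.range T) - 1) := by
  classical
  set E : U →ₗ[F] U := Eop B a a with hEdef
  set S : U →ₗ[F] U := T + E with hSdef
  have hEapp : ∀ x : U, E x = (B x a) • a := fun x => rfl
  have hSapp : ∀ x : U, S x = T x + (B x a) • a := fun x => rfl
  have hrefl : B.IsRefl := hsymm.isRefl
  -- self-adjointness of S
  have hSsa : ∀ x y : U, B (S x) y = B x (S y) := by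
    intro x y
    simp only [hSapp, map_add, LinearMap.add_apply, map_smul, LinearMap.smul_apply,
      smul_eq_mul, hT x y]
    congr 1
    rw [← hsymm.eq a y]
    ring
  -- part 1 : a ∈ range T
  have hker : ∀ n ∈ LinearMap.ker T, B n a = 0 := by
    intro n hn
    have hTn : T n = 0 := hn
    have h0 := hskew n
    rw [show (T + Eop B a a) n = S n from rfl, hSapp, hTn, zero_add, map_smul,
      smul_eq_mul] at h0
    rcases mul_eq_zero.mp h0 with h | h
    · exact h
    · exact h
  have hrangeT : LinearMap.range T = B.orthogonal (LinearMap.ker T) := by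
    apply Submodule.eq_of_le_of_finrank_le
    · rintro _ ⟨x, rfl⟩
      intro n hn
      have hTn : T n = 0 := hn
      show B n (T x) = 0
      rw [← hT n x, hTn, map_zero, LinearMap.zero_apply]
    · rw [LinearMap.BilinForm.finrank_orthogonal hnd]
      have := LinearMap.finrank_range_add_finrank_ker T
      omega
  have ha : a ∈ LinearMap.range T := by
    rw [hrangeT]
    intro n hn
    exact hker n hn
  refine ⟨ha, ?_⟩
  -- the alternating form
  set C : LinearMap.BilinForm F U := B.compl₂ S with hCdef
  have hCapp : ∀ x y : U, C x y = B x (S y) := fun x y => rfl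
  have hCalt : C.IsAlt := fun x => hskew x
  have hCsymm : ∀ x y : U, C x y = C y x := by
    intro x y
    rw [hCapp, hCapp, ← hSsa x y]
    rw [← hsymm.eq (S x) y]
  -- rank of S is even
  obtain ⟨W, hWcompl⟩ := Submodule.exists_isCompl (LinearMap.ker S)
  have hres : (C.restrict W).Nondegenerate := by
    apply (LinearMap.IsRefl.nondegenerate_iff_separatingLeft
      (LinearMap.IsAlt.isRefl (B := C.restrict W) (fun w => hCalt w))).mpr
    rintro ⟨w, hw⟩ h
    have hallW : ∀ p ∈ W, C w p = 0 := by
      intro p hp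
      simpa using h ⟨p, hp⟩
    have hall : ∀ u : U, C u w = 0 := by
      intro u
      have hu : u ∈ (LinearMap.ker S) ⊔ W := by rw [hWcompl.sup_eq_top]; trivial
      obtain ⟨k, hk, p, hp, rfl⟩ := Submodule.mem_sup.mp hu
      rw [← hCsymm, hCapp]
      have hSk : S k = 0 := hk
      simp only [map_add, hSk, map_zero, zero_add]
      exact hallW p hp
    have hSw : S w = 0 := by
      apply hnd.1
      intro u
      rw [← hsymm.eq u (S w)]
      exact hall u
    have hw0 : w = 0 := by
      have := hWcompl.disjoint
      rw [disjoint_comm, Submodule.disjoint_def] at this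
      exact this w hw hSw
    exact Subtype.ext hw0
  have hWalt : (C.restrict W).IsAlt := fun w => hCalt w
  have hSeven : Even (Module.finrank F (LinearMap.range S)) := by
    have hWrank : Module.finrank F W = Module.finrank F (LinearMap.range S) := by
      have h1 := Submodule.finrank_add_eq_of_isCompl hWcompl
      have h2 := LinearMap.finrank_range_add_finrank_ker S
      omega
    rw [← hWrank]
    exact even_finrank_of_alt_nondeg _ _ rfl _ hWalt hres
  -- rank inequalities
  have hsubadd : ∀ f g : U →ₗ[F] U,
      Module.finrank F (LinearMap.range (f + g)) ≤
        Module.finrank F (LinearMap.range f) + Module.finrank F (LinearMap.range g) := by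
    intro f g
    have hle : LinearMap.range (f + g) ≤ LinearMap.range f ⊔ LinearMap.range g := by
      rintro _ ⟨x, rfl⟩
      exact Submodule.mem_sup.mpr ⟨f x, ⟨x, rfl⟩, g x, ⟨x, rfl⟩, rfl⟩
    have h1 := Submodule.finrank_mono hle
    have h2 := Submodule.finrank_sup_add_finrank_inf_eq (LinearMap.range f) (LinearMap.range g)
    omega
  have hErank : Module.finrank F (LinearMap.range E) ≤ 1 := by
    have hle : LinearMap.range E ≤ Submodule.span F {a} := by
      rintro _ ⟨x, rfl⟩
      rw [hEapp]
      exact Submodule.smul_mem _ _ (Submodule.mem_span_singleton_self a)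
    by_cases ha0 : a = 0
    · have : LinearMap.range E ≤ ⊥ := by
        rw [ha0] at hle
        simpa using hle
      have := Submodule.finrank_mono this
      simpa using this.trans (by simp)
    · have := Submodule.finrank_mono hle
      rwa [finrank_span_singleton ha0] at this
  have hST : T = S + E := by
    ext x
    rw [LinearMap.add_apply, hSdef, LinearMap.add_apply, add_assoc]
    have h2 : E x + E x = 0 := by
      have : E x + E x = (2 : F) • E x := (two_smul F (E x)).symm
      rw [this, show (2 : F) = 0 from by exact_mod_cast CharP.cast_eq_zero F 2, zero_smul]
    rw [h2, add_zero]
  have hub : Module.finrank F (LinearMap.range S) ≤ Module.finrank F (LinearMap.range T) + 1 := by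
    have h := hsubadd T E
    rw [← hSdef] at h
    omega
  have hlb : Module.finrank F (LinearMap.range T) ≤ Module.finrank F (LinearMap.range S) + 1 := by
    have h := hsubadd S E
    rw [← hST] at h
    omega
  obtain ⟨k, hk⟩ := hSeven
  constructor
  · intro hTe
    obtain ⟨m, hm⟩ := hTe
    show Module.finrank F (LinearMap.range S) = Module.finrank F (LinearMap.range T)
    omega
  · intro hTo
    obtain ⟨m, hm⟩ := hTo
    show Module.finrank F (LinearMap.range S) = _ + 1 ∨ Module.finrank F (LinearMap.range S) = _ - 1
    omega
end

section
/- Let U be an F_q-space (q even) with nondegenerate symmetric bilinear form b. If T and S are self-adjoint operators with T + E_{a,a} and S + E_{b,b} skew-symmetric, then E_{a+b,a+b} is the unique rank ≤ 1 self-adjoint operator R' with T + S + R' skew-symmetric. -/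
/-- If `T + E_{a,a}` and `S + E_{b,b}` are skew-symmetric, then `E_{a+b,a+b}`
is the unique self-adjoint operator of rank at most 1 making `T + S`
skew-symmetric after correction. -/
theorem correction_of_sum
    (F U : Type*) [Field F] [Fintype F] [CharP F 2]
    [AddCommGroup U] [Module F U] [FiniteDimensional F U]
    (B : LinearMap.BilinForm F U) (hsymm : B.IsSymm) (hnd : B.Nondegenerate)
    (T S : U →ₗ[F] U) (hT : IsSelfAdjOp B T) (hS : IsSelfAdjOp B S)
    (a b : U) (hTa : IsSkewOp B (T + Eop B a a)) (hSb : IsSkewOp B (S + Eop B b b)) :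
    IsSkewOp B (T + S + Eop B (a + b) (a + b)) ∧
    ∀ R' : U →ₗ[F] U, IsSelfAdjOp B R' →
      Module.finrank F (LinearMap.range R') ≤ 1 →
      IsSkewOp B (T + S + R') → R' = Eop B (a + b) (a + b) := by

  classical
  have h2 : (2 : F) = 0 := by exact_mod_cast CharP.cast_eq_zero F 2
  have hsy : ∀ x y : U, B x y = B y x := fun x y => hsymm.eq x y
  have hTa' : ∀ x, B x (T x) + B x a * B x a = 0 := by
    intro x
    have := hTa x
    simpa [Eop, smul_eq_mul, mul_comm] using this
  have hSb' : ∀ x, B x (S x) + B x b * B x b = 0 := by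
    intro x
    have := hSb x
    simpa [Eop, smul_eq_mul, mul_comm] using this
  have hskewE : IsSkewOp B (T + S + Eop B (a + b) (a + b)) := by
    intro x
    have hE : B x (Eop B (a + b) (a + b) x) = (B x a + B x b) * (B x a + B x b) := by
      simp [Eop, smul_eq_mul]; ring
    simp only [LinearMap.add_apply, map_add, hE]
    linear_combination hTa' x + hSb' x + (B x a * B x b) * h2
  refine ⟨hskewE, ?_⟩
  intro R' hR' hrank hskew
  set c := a + b with hc
  have hEc : ∀ x, B x (Eop B c c x) = B x c * B x c := by
    intro x; simp [Eop, smul_eq_mul, mul_comm]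
  have h1 : ∀ x, B x (R' x) = B x c * B x c := by
    intro x
    have hA := hskew x
    have hB2 := hskewE x
    simp only [LinearMap.add_apply, map_add, hEc] at hA hB2
    linear_combination hA - hB2
  by_cases hR0 : R' = 0
  · have hc0 : c = 0 := by
      apply hnd.1
      intro y
      rw [← hsy y c]
      have h := h1 y
      rw [hR0] at h
      simp only [LinearMap.zero_apply, map_zero] at h
      exact mul_self_eq_zero.mp h.symm
    subst hR0
    ext x
    simp [Eop, hc0]
  · obtain ⟨x0, hx0⟩ : ∃ x0, R' x0 ≠ 0 := by
      by_contra h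
      push_neg at h
      exact hR0 (LinearMap.ext fun x => by simpa using h x)
    set v := R' x0 with hv
    have hvne : v ≠ 0 := hx0
    have hspan : LinearMap.range R' = Submodule.span F {v} := by
      have hle : Submodule.span F {v} ≤ LinearMap.range R' := by
        rw [Submodule.span_singleton_le_iff_mem]
        exact ⟨x0, rfl⟩
      have h1' : Module.finrank F (Submodule.span F {v}) = 1 :=
        finrank_span_singleton hvne
      exact (Submodule.eq_of_le_of_finrank_le hle (by rw [h1']; exact hrank)).symm
    have hmem : ∀ x, ∃ t : F, R' x = t • v := by
      intro x
      have hx : R' x ∈ Submodule.span F {v} := hspan ▸ LinearMap.mem_range_self R' x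
      obtain ⟨t, ht⟩ := Submodule.mem_span_singleton.mp hx
      exact ⟨t, ht.symm⟩
    obtain ⟨y0, hy0⟩ : ∃ y0, B v y0 ≠ 0 := by
      by_contra h
      push_neg at h
      exact hvne (hnd.1 v h)
    obtain ⟨s, hs⟩ := hmem y0
    set lam := s / B v y0 with hlam
    have key : ∀ x, R' x = (lam * B x v) • v := by
      intro x
      obtain ⟨t, ht⟩ := hmem x
      have hadj := hR' x y0
      rw [ht, hs] at hadj
      simp only [map_smul, LinearMap.smul_apply, smul_eq_mul] at hadj
      have hBxv : B x v = B v x := hsy x v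
      have htl : t = lam * B x v := by
        rw [hlam, div_mul_eq_mul_div, eq_div_iff hy0]
        linear_combination hadj
      rw [ht, htl]
    have hinj : Function.Injective (fun t : F => t * t) := by
      intro p q h
      simp only at h
      have hz : (p + q) * (p + q) = 0 := by
        have hpq : (2:F) * (p * q) = 0 := by rw [h2]; ring
        linear_combination h + hpq + (q * q) * h2
      have hz' := eq_neg_of_add_eq_zero_left (mul_self_eq_zero.mp hz)
      rw [CharTwo.neg_eq] at hz'
      exact hz'
    obtain ⟨mu, hmu⟩ : ∃ mu : F, mu * mu = lam :=
      Finite.injective_iff_surjective.mp hinj lam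
    have heq : ∀ x, mu * B x v = B x c := by
      intro x
      apply hinj
      simp only
      have h := h1 x
      rw [key x] at h
      simp only [map_smul, smul_eq_mul] at h
      linear_combination h + (B x v * B x v) * hmu
    have hcv : c = mu • v := by
      have hz : ∀ y, B (mu • v - c) y = 0 := by
        intro y
        rw [← hsy y (mu • v - c)]
        simp only [map_sub, map_smul, smul_eq_mul]
        linear_combination heq y
      have := hnd.1 _ hz
      rw [sub_eq_zero] at this
      exact this.symm
    ext x
    rw [key x]
    show (lam * B x v) • v = B x c • c
    rw [hcv, map_smul, smul_eq_mul, smul_smul]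
    congr 1
    rw [← hmu]
    ring
end

section
/- Let U be an F_q-space of odd dimension n (q even) with nondegenerate symmetric bilinear form b, and let T be an invertible self-adjoint operator with T + E_{a,a} skew-symmetric (a ≠ 0). Then ker(T + E_{a,a}) = ⟨aT^{-1}⟩ and b(a, aT^{-1}) ≠ 0. -/
open MvPolynomial Matrix in
/-- Over a field of characteristic two, a symmetric matrix with zero diagonal
(i.e. an alternating matrix) of odd size has zero determinant. -/
theorem det_eq_zero_of_symm_zero_diag_odd {F : Type*} [Field F] [CharP F 2]
    {m : ℕ} (hm : Odd m) (M : Matrix (Fin m) (Fin m) F)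
    (hsym : Mᵀ = M) (hdiag : ∀ i, M i i = 0) : M.det = 0 := by
  classical
  let N : Matrix (Fin m) (Fin m) (MvPolynomial (Fin m × Fin m) ℤ) :=
    Matrix.of fun i j => if i < j then X (i, j) else if j < i then -X (j, i) else 0
  have hNe : ∀ i j, N i j = if i < j then X (i, j) else if j < i then -X (j, i) else 0 :=
    fun i j => rfl
  have hNT : Nᵀ = -N := by
    funext i j
    have h1 : Nᵀ i j = N j i := rfl
    have h2 : (-N) i j = -(N i j) := rfl
    rw [h1, h2, hNe, hNe]
    rcases lt_trichotomy i j with h | h | h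
    · rw [if_neg (asymm h), if_pos h, if_pos h]
    · subst h; simp
    · rw [if_pos h, if_neg (asymm h), if_pos h, neg_neg]
  have hdetN : N.det = 0 := by
    have h1 : N.det = -N.det := by
      conv_lhs => rw [← det_transpose, hNT, det_neg, Fintype.card_fin, hm.neg_one_pow]
      ring
    have h2 : (2 : MvPolynomial (Fin m × Fin m) ℤ) * N.det = 0 := by linear_combination h1
    rcases mul_eq_zero.mp h2 with h | h
    · exact absurd h two_ne_zero
    · exact h
  let φ : MvPolynomial (Fin m × Fin m) ℤ →+* F :=
    eval₂Hom (Int.castRingHom F) fun p => M p.1 p.2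
  have hφX : ∀ p : Fin m × Fin m, φ (X p) = M p.1 p.2 := fun p => eval₂Hom_X' _ _ p
  have hmap : N.map φ = M := by
    funext i j
    have h0 : N.map φ i j = φ (N i j) := rfl
    rw [h0, hNe]
    rcases lt_trichotomy i j with h | h | h
    · rw [if_pos h, hφX]
    · subst h; simp [hdiag i]
    · have hji : M i j = M j i := by
        have := congrFun (congrFun hsym j) i
        rwa [transpose_apply] at this
      rw [if_neg (asymm h), if_pos h, map_neg, hφX, hji, CharTwo.neg_eq]
  calc M.det = (N.map φ).det := by rw [hmap]
    _ = φ N.det := (RingHom.map_det φ N).symm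
    _ = 0 := by rw [hdetN, map_zero]


/-- If `n` is odd, `T` is invertible and self-adjoint, `a ≠ 0` and
`T + E_{a,a}` is skew-symmetric, then `ker (T + E_{a,a}) = ⟨a T⁻¹⟩` and
`B a (a T⁻¹) ≠ 0`. -/
theorem ker_of_skew_correction
    (F U : Type*) [Field F] [Fintype F] [CharP F 2]
    [AddCommGroup U] [Module F U] [FiniteDimensional F U]
    (hodd : Odd (Module.finrank F U))
    (B : LinearMap.BilinForm F U) (hsymm : B.IsSymm) (hnd : B.Nondegenerate)
    (T : U →ₗ[F] U) (hT : IsSelfAdjOp B T) (hTinv : Function.Bijective T)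
    (a : U) (ha : a ≠ 0) (hskew : IsSkewOp B (T + Eop B a a)) :
    ∃ w : U, T w = a ∧
      LinearMap.ker (T + Eop B a a) = Submodule.span F {w} ∧ B a w ≠ 0 := by
  classical
  set S : U →ₗ[F] U := T + Eop B a a with hS
  have hSx : ∀ x, S x = T x + B x a • a := by
    intro x
    simp [hS, Eop, LinearMap.add_apply, LinearMap.smulRight_apply, LinearMap.flip_apply]
  -- in characteristic two, `x + y = 0` implies `x = y` (in `U`)
  have hchar : ∀ x y : U, x + y = 0 → x = y := by
    intro x y h
    have h2 : y + y = 0 := by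
      rw [← two_smul F y, show (2 : F) = 0 from CharTwo.two_eq_zero, zero_smul]
    have := neg_eq_of_add_eq_zero_left h  -- -y = x
    rw [← this, neg_eq_of_add_eq_zero_left h2]
  -- Step A : the kernel of S is nontrivial
  have hker : ∃ v : U, v ≠ 0 ∧ S v = 0 := by
    by_contra hcon
    push_neg at hcon
    have hkerbot : LinearMap.ker S = ⊥ :=
      LinearMap.ker_eq_bot'.mpr fun v hv => by
        by_contra h; exact (hcon v h) hv
    have hsurj : Function.Surjective S :=
      (LinearMap.injective_iff_surjective).mp (LinearMap.ker_eq_bot.mp hkerbot)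
    -- the bilinear form C x y = B x (S y) is separating
    set C : LinearMap.BilinForm F U := B.compl₂ S with hC
    have hCx : ∀ x y, C x y = B x (S y) := fun x y => rfl
    have hCsep : C.SeparatingLeft := by
      intro x hx
      refine hnd.1 x fun z => ?_
      obtain ⟨y, hy⟩ := hsurj z
      rw [← hy, ← hCx]; exact hx y
    -- and symmetric with zero diagonal
    have hCsymm : ∀ x y : U, C x y = C y x := by
      intro x y
      have h := hskew (x + y)
      rw [map_add] at h
      simp only [map_add, LinearMap.add_apply] at h
      have hx := hskew x
      have hy := hskew y
      have h' : B x (S y) + B y (S x) = 0 := by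
        rw [hx, hy] at h; linear_combination h
      rw [hCx, hCx, (by linear_combination h' : B x (S y) = -B y (S x)), CharTwo.neg_eq]
    -- move to matrices
    let bU := Module.finBasis F U
    set MC := LinearMap.toMatrix₂ bU bU C with hMC
    have hdet : MC.det ≠ 0 := by
      have := (LinearMap.separatingLeft_iff_det_ne_zero (B := C) bU).mp hCsep
      exact this
    refine hdet (det_eq_zero_of_symm_zero_diag_odd hodd MC ?_ ?_)
    · funext i j
      rw [Matrix.transpose_apply, hMC, LinearMap.toMatrix₂_apply, LinearMap.toMatrix₂_apply,
        hCsymm]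
    · intro i
      rw [hMC, LinearMap.toMatrix₂_apply, hCx]
      exact hskew (bU i)
  -- Step B : construct w
  obtain ⟨v, hv0, hSv⟩ := hker
  have hTv : T v = B v a • a := hchar _ _ (by rw [← hSx]; exact hSv)
  have hc : B v a ≠ 0 := by
    intro h
    apply hv0
    apply hTinv.injective
    rw [hTv, h, zero_smul, map_zero]
  set w : U := (B v a)⁻¹ • v with hw
  have hTw : T w = a := by
    rw [hw, map_smul, hTv, smul_smul, inv_mul_cancel₀ hc, one_smul]
  have hSw : S w = 0 := by rw [hw, map_smul, hSv, smul_zero]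
  have hBwa : B w a = 1 := by
    have h0 := hSw
    rw [hSx, hTw] at h0
    have h1 : a = B w a • a := hchar _ _ h0
    have h2 : (1 - B w a) • a = 0 := by rw [sub_smul, one_smul, ← h1, sub_self]
    rcases smul_eq_zero.mp h2 with h | h
    · exact (sub_eq_zero.mp h).symm
    · exact absurd h ha
  have hBaw : B a w = 1 := by
    have := hsymm.eq w a
    simpa [hBwa] using this.symm
  refine ⟨w, hTw, ?_, by rw [hBaw]; exact one_ne_zero⟩
  apply le_antisymm
  · intro u hu
    have hSu : S u = 0 := hu
    have hTu : T u = B u a • a := hchar _ _ (by rw [← hSx]; exact hSu)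
    have : T u = T (B u a • w) := by rw [map_smul, hTw, hTu]
    have hu' : u = B u a • w := hTinv.injective this
    exact Submodule.mem_span_singleton.mpr ⟨B u a, hu'.symm⟩
  · rw [Submodule.span_le, Set.singleton_subset_iff]
    exact LinearMap.mem_ker.mpr hSw
end

section
/- Let Σ be a symplectic spread-set on U = V(n,q) with n odd and q even, i.e., a set of q^n self-adjoint operators containing 0 such that L + L' is invertible for all distinct L, L' ∈ Σ. Then there is a unique bijection C: U → Σ such that C(a) + E_{a,a} is skew-symmetric for all a ∈ U. Moreover C is additive if and only if Σ is closed under addition. -/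
section Aux

open Matrix

noncomputable def genAlt (n : ℕ) :
    Matrix (Fin n) (Fin n) (MvPolynomial (Fin n × Fin n) ℤ) :=
  Matrix.of fun i j =>
    if i < j then MvPolynomial.X (i, j) else
      if j < i then -MvPolynomial.X (j, i) else 0

lemma genAlt_transpose (n : ℕ) : (genAlt n)ᵀ = -(genAlt n) := by
  ext i j
  simp only [Matrix.transpose_apply, Matrix.neg_apply, genAlt, Matrix.of_apply]
  rcases lt_trichotomy i j with h | h | h
  · simp [h, h.not_gt, ne_of_lt h]
  · simp [h]
  · simp [h, h.not_gt, ne_of_gt h]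

lemma genAlt_det (n : ℕ) (hodd : Odd n) : (genAlt n).det = 0 := by
  have h1 : (genAlt n).det = (-(genAlt n)).det := by
    rw [← genAlt_transpose, Matrix.det_transpose]
  rw [Matrix.det_neg, Fintype.card_fin, hodd.neg_one_pow, neg_one_mul] at h1
  have h2 : (2 : MvPolynomial (Fin n × Fin n) ℤ) * (genAlt n).det = 0 := by
    rw [two_mul]; nth_rewrite 1 [h1]; ring
  rcases mul_eq_zero.mp h2 with h | h
  · exact absurd h two_ne_zero
  · exact h

/-- An odd-size symmetric matrix with zero diagonal over a field of characteristic two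
has zero determinant. -/
lemma det_alt_odd {n : ℕ} (hodd : Odd n) {F : Type*} [Field F] [CharP F 2]
    (M : Matrix (Fin n) (Fin n) F) (hsym : ∀ i j, M i j = M j i)
    (hdiag : ∀ i, M i i = 0) : M.det = 0 := by
  classical
  let φ : MvPolynomial (Fin n × Fin n) ℤ →+* F :=
    (MvPolynomial.eval₂Hom (Int.castRingHom F) (fun p : Fin n × Fin n => M p.1 p.2))
  have hmap : (genAlt n).map φ = M := by
    ext i j
    simp only [Matrix.map_apply, genAlt, Matrix.of_apply]
    rcases lt_trichotomy i j with h | h | h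
    · simp [h, φ]
    · simp [h, h.not_lt, hdiag j, φ]
    · simp only [h, h.not_gt, not_lt_of_gt h, if_false, if_true, map_neg, φ]
      rw [MvPolynomial.eval₂Hom_X']
      rw [CharTwo.neg_eq, hsym i j]
  rw [← hmap, show (genAlt n).map φ = φ.mapMatrix (genAlt n) from
    (RingHom.mapMatrix_apply φ (genAlt n)).symm, ← RingHom.map_det,
    genAlt_det n hodd, map_zero]

variable {F U : Type*} [Field F] [Fintype F] [CharP F 2]
  [AddCommGroup U] [Module F U] [FiniteDimensional F U]

lemma sq_bij : Function.Bijective (fun x : F => x ^ 2) := by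
  rw [Finite.injective_iff_bijective.symm]
  intro x y h
  simp only at h
  have h2 : (x + y) ^ 2 = 0 := by
    rw [CharTwo.add_sq, h, CharTwo.add_self_eq_zero]
  have h3 : x + y = 0 := by
    exact pow_eq_zero_iff (two_ne_zero) |>.mp h2
  have := CharTwo.add_eq_iff_eq_add.mp h3
  rwa [zero_add] at this

lemma sq_inj_s10 : Function.Injective (fun x : F => x ^ 2) := sq_bij.injective

variable (B : LinearMap.BilinForm F U)

/-- Existence of the vector `a` such that `B x (L x) = B x a ^ 2`. -/
lemma exists_a (hsymm : B.IsSymm) (hnd : B.Nondegenerate) {L : U →ₗ[F] U}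
    (hL : IsSelfAdjOp B L) : ∃ a : U, ∀ x : U, B x (L x) = B x a ^ 2 := by
  have hbij : Function.Bijective (fun x : F => x ^ 2) := sq_bij
  set s : F → F := Function.surjInv hbij.surjective with hs
  have hss : ∀ t : F, (s t) ^ 2 = t := fun t => Function.surjInv_eq hbij.surjective t
  have hcross : ∀ x y : U, B y (L x) = B x (L y) := by
    intro x y
    rw [← hL x y]
    have := hsymm.eq (L x) y
    simpa using this.symm
  have hQadd : ∀ x y : U, B (x + y) (L (x + y)) = B x (L x) + B y (L y) := by
    intro x y
    simp only [map_add, LinearMap.add_apply]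
    rw [hcross x y]
    linear_combination CharTwo.add_self_eq_zero (B x (L y))
  have hQsmul : ∀ (c : F) (x : U), B (c • x) (L (c • x)) = c ^ 2 * B x (L x) := by
    intro c x
    simp only [_root_.map_smul, LinearMap.smul_apply, smul_eq_mul]
    ring
  set g : U →ₗ[F] F :=
    { toFun := fun x => s (B x (L x))
      map_add' := by
        intro x y
        apply hbij.injective
        simp only
        rw [hss, CharTwo.add_sq, hss, hss, hQadd]
      map_smul' := by
        intro c x
        apply hbij.injective
        simp only [RingHom.id_apply, smul_eq_mul]
        rw [hss, mul_pow, hss, hQsmul] } with hg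
  refine ⟨(B.toDual hnd).symm g, fun x => ?_⟩
  have h1 : B ((B.toDual hnd).symm g) x = g x :=
    LinearMap.BilinForm.apply_toDual_symm_apply g x
  have h2 : B x ((B.toDual hnd).symm g) = g x := by
    rw [← h1]
    have := hsymm.eq ((B.toDual hnd).symm g) x
    simpa using this.symm
  rw [h2]
  show B x (L x) = (s (B x (L x))) ^ 2
  rw [hss]

/-- Uniqueness of `a`. -/
lemma uniq_a (hsymm : B.IsSymm) (hnd : B.Nondegenerate) {a a' : U}
    (h : ∀ x : U, B x a ^ 2 = B x a' ^ 2) : a = a' := by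
  have h1 : ∀ x : U, B x a = B x a' := fun x => sq_inj_s10 (h x)
  have h2 : ∀ x : U, B (a - a') x = 0 := by
    intro x
    have ha := hsymm.eq a x
    have ha' := hsymm.eq a' x
    rw [map_sub, LinearMap.sub_apply, ha, ha', h1, sub_self]
  have := hnd.1 (a - a') (fun n => h2 n)
  rwa [sub_eq_zero] at this

lemma skew_iff (L : U →ₗ[F] U) (a : U) :
    IsSkewOp B (L + Eop B a a) ↔ ∀ x : U, B x (L x) = B x a ^ 2 := by
  have hE : ∀ x : U, (Eop B a a) x = B x a • a := by
    intro x
    simp [Eop, LinearMap.smulRight_apply, LinearMap.flip_apply]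
  constructor
  · intro h x
    have := h x
    rw [LinearMap.add_apply, map_add, hE, _root_.map_smul, smul_eq_mul] at this
    have h2 := CharTwo.add_eq_iff_eq_add.mp this
    rw [zero_add] at h2
    rw [h2]; ring
  · intro h x
    rw [LinearMap.add_apply, map_add, hE, _root_.map_smul, smul_eq_mul, h x]
    rw [show B x a ^ 2 + B x a * B x a = B x a ^ 2 + B x a ^ 2 by ring]
    exact CharTwo.add_self_eq_zero _

/-- Two distinct members with the same label contradict invertibility + odd rank. -/
lemma inj_step (hodd : Odd (Module.finrank F U)) (hsymm : B.IsSymm)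
    (hnd : B.Nondegenerate) {L L' : U →ₗ[F] U}
    (hL : IsSelfAdjOp B L) (hL' : IsSelfAdjOp B L')
    (hbij : Function.Bijective (L + L')) {a : U}
    (h : ∀ x : U, B x (L x) = B x a ^ 2) (h' : ∀ x : U, B x (L' x) = B x a ^ 2) :
    False := by
  classical
  set M : U →ₗ[F] U := L + L' with hM
  set B' : LinearMap.BilinForm F U := B.compl₂ M with hB'
  have hB'app : ∀ x y : U, B' x y = B x (M y) := fun x y => rfl
  have halt : ∀ x : U, B' x x = 0 := by
    intro x
    rw [hB'app, hM, LinearMap.add_apply, map_add, h x, h' x]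
    exact CharTwo.add_self_eq_zero _
  have hMsa : IsSelfAdjOp B M := by
    intro x y
    simp only [hM, LinearMap.add_apply, map_add]
    rw [hL x y, hL' x y]
  have hB'symm : ∀ x y : U, B' x y = B' y x := by
    intro x y
    rw [hB'app, hB'app, ← hMsa y x]
    have := hsymm.eq (M y) x
    simpa using this.symm
  have hB'nd : B'.Nondegenerate := by
    refine ⟨fun x hx => ?_, fun y hy => ?_⟩
    · apply hnd.1 x
      intro z
      obtain ⟨y, rfl⟩ := hbij.surjective z
      exact hx y
    · apply hnd.1 y
      intro z
      obtain ⟨w, rfl⟩ := hbij.surjective z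
      rw [← hB'app, hB'symm]
      exact hy w
  set b := Module.finBasis F U with hb
  set A := LinearMap.BilinForm.toMatrix b B' with hA
  have hAdet : A.det ≠ 0 :=
    (LinearMap.BilinForm.nondegenerate_iff_det_ne_zero b).mp hB'nd
  apply hAdet
  apply det_alt_odd hodd
  · intro i j
    rw [hA, LinearMap.BilinForm.toMatrix_apply, LinearMap.BilinForm.toMatrix_apply]
    exact hB'symm _ _
  · intro i
    rw [hA, LinearMap.BilinForm.toMatrix_apply]
    exact halt _

end Aux

/-- Canonical labeling of a symplectic spread-set: there is a unique bijection
`C : U → S` such that `C a + E_{a,a}` is skew-symmetric for all `a`, and `C`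
is additive iff `S` is additively closed. -/
theorem canonical_labeling
    (F U : Type*) [Field F] [Fintype F] [CharP F 2]
    [AddCommGroup U] [Module F U] [FiniteDimensional F U]
    (hodd : Odd (Module.finrank F U))
    (B : LinearMap.BilinForm F U) (hsymm : B.IsSymm) (hnd : B.Nondegenerate)
    (S : Set (U →ₗ[F] U)) (h0 : 0 ∈ S)
    (hcard : S.ncard = Fintype.card F ^ Module.finrank F U)
    (hsa : ∀ L ∈ S, IsSelfAdjOp B L)
    (hinv : ∀ L ∈ S, ∀ L' ∈ S, L ≠ L' → Function.Bijective (L + L')) :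
    ∃ C : U → (U →ₗ[F] U),
      (Set.BijOn C Set.univ S ∧ ∀ a : U, IsSkewOp B (C a + Eop B a a)) ∧
      (∀ C' : U → (U →ₗ[F] U),
        Set.BijOn C' Set.univ S → (∀ a : U, IsSkewOp B (C' a + Eop B a a)) →
        C' = C) ∧
      ((∀ a b : U, C (a + b) = C a + C b) ↔ ∀ L ∈ S, ∀ L' ∈ S, L + L' ∈ S) := by
  classical
  haveI : Finite U := Module.finite_of_finite F
  haveI : Fintype U := Fintype.ofFinite U
  haveI : Finite (U →ₗ[F] U) :=
    Finite.of_injective (fun (L : U →ₗ[F] U) => (L : U → U)) DFunLike.coe_injective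
  haveI : Fintype S := Fintype.ofFinite S
  -- the labeling map
  set aof : (U →ₗ[F] U) → U := fun L =>
    if h : ∃ a : U, ∀ x : U, B x (L x) = B x a ^ 2 then h.choose else 0 with haof
  have haof_spec : ∀ L ∈ S, ∀ x : U, B x (L x) = B x (aof L) ^ 2 := by
    intro L hL x
    have hex : ∃ a : U, ∀ x : U, B x (L x) = B x a ^ 2 :=
      exists_a B hsymm hnd (hsa L hL)
    rw [haof]
    simp only [dif_pos hex]
    exact hex.choose_spec x
  have haof_uniq : ∀ L ∈ S, ∀ a : U, (∀ x : U, B x (L x) = B x a ^ 2) → aof L = a := by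
    intro L hL a ha
    apply uniq_a B hsymm hnd
    intro x
    rw [← haof_spec L hL x, ha x]
  -- injectivity on S
  have hinj : ∀ L ∈ S, ∀ L' ∈ S, aof L = aof L' → L = L' := by
    intro L hL L' hL' heq
    by_contra hne
    exact inj_step B hodd hsymm hnd (hsa L hL) (hsa L' hL')
      (hinv L hL L' hL' hne) (haof_spec L hL)
      (fun x => by rw [haof_spec L' hL' x, heq])
  -- bijectivity of subtype map
  set g : S → U := fun L => aof L.1 with hgdef
  have hginj : Function.Injective g := by
    intro L L' h
    exact Subtype.ext (hinj L.1 L.2 L'.1 L'.2 h)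
  have hcards : Fintype.card S = Fintype.card U := by
    rw [Module.card_eq_pow_finrank (K := F) (V := U), ← hcard]
    rw [Set.ncard_eq_toFinset_card']
    simp [Set.toFinset_card]
  have hgbij : Function.Bijective g :=
    (Fintype.bijective_iff_injective_and_card g).mpr ⟨hginj, hcards⟩
  set e : S ≃ U := Equiv.ofBijective g hgbij with he
  set C : U → (U →ₗ[F] U) := fun a => (e.symm a).1 with hC
  have hCmem : ∀ a : U, C a ∈ S := fun a => (e.symm a).2
  have haofC : ∀ a : U, aof (C a) = a := by
    intro a
    have : e (e.symm a) = a := e.apply_symm_apply a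
    exact this
  have hC_spec : ∀ a : U, ∀ x : U, B x (C a x) = B x a ^ 2 := by
    intro a x
    rw [haof_spec (C a) (hCmem a) x, haofC]
  have hCuniq : ∀ a : U, ∀ L ∈ S, (∀ x : U, B x (L x) = B x a ^ 2) → L = C a := by
    intro a L hL h
    have h1 : aof L = a := haof_uniq L hL a h
    apply hinj L hL (C a) (hCmem a)
    rw [h1, haofC]
  have hskew : ∀ a : U, IsSkewOp B (C a + Eop B a a) :=
    fun a => (skew_iff B (C a) a).mpr (hC_spec a)
  have hbijOn : Set.BijOn C Set.univ S := by
    refine ⟨fun a _ => hCmem a, ?_, ?_⟩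
    · intro a _ b _ hab
      rw [← haofC a, ← haofC b, hab]
    · intro L hL
      refine ⟨aof L, Set.mem_univ _, ?_⟩
      exact (hCuniq (aof L) L hL (haof_spec L hL)).symm
  refine ⟨C, ⟨hbijOn, hskew⟩, ?_, ?_⟩
  · -- uniqueness
    intro C' hC'bij hC'skew
    funext a
    have hmem : C' a ∈ S := hC'bij.mapsTo (Set.mem_univ a)
    have hspec : ∀ x : U, B x (C' a x) = B x a ^ 2 :=
      (skew_iff B (C' a) a).mp (hC'skew a)
    exact hCuniq a (C' a) hmem hspec
  · constructor
    · intro hadd L hL L' hL'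
      obtain ⟨a, -, rfl⟩ := hbijOn.surjOn hL
      obtain ⟨b, -, rfl⟩ := hbijOn.surjOn hL'
      rw [← hadd a b]
      exact hCmem (a + b)
    · intro hclosed a b
      have hmem : C a + C b ∈ S := hclosed (C a) (hCmem a) (C b) (hCmem b)
      have hspec : ∀ x : U, B x ((C a + C b) x) = B x (a + b) ^ 2 := by
        intro x
        rw [LinearMap.add_apply, map_add, hC_spec a x, hC_spec b x, map_add,
          CharTwo.add_sq]
      exact (hCuniq (a + b) (C a + C b) hmem hspec).symm
end

section
/- Let Σ = {C(a) : a ∈ U} be a symplectic spread-set of self-adjoint operators on U = V(n,2) (n odd) with canonical labeling C (so C(a) + E_{a,a} is skew-symmetric for each a, and C is a bijection U → Σ with C(0)=0 and C(a)+C(b) invertible for a ≠ b). Define B(a) := C(a) + E_{a,a}. Then Δ = {B(a) : a ∈ U} is a DHO-set: each B(a) is skew-symmetric; for distinct a, b ∈ U, rk(B(a)+B(b)) = n−1; and for each fixed a, the kernels ker(B(a)+B(b)) for b ≠ a run over all 1-dimensional subspaces of U. -/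
section AuxEven

open Module Submodule

universe u

lemma alt_nondeg_even_finrank :
    ∀ (m : ℕ) (V : Type u) [AddCommGroup V] [Module (ZMod 2) V]
      [FiniteDimensional (ZMod 2) V],
      Module.finrank (ZMod 2) V = m →
      ∀ (φ : LinearMap.BilinForm (ZMod 2) V),
        (∀ x, φ x x = 0) → φ.Nondegenerate → Even m := by
  intro m
  induction m using Nat.strong_induction_on with
  | _ m ih =>
  intro V _ _ _ hrank φ halt hnd
  by_cases htriv : ∀ x : V, x = 0
  · have hsub : Subsingleton V := ⟨fun a b => by rw [htriv a, htriv b]⟩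
    have h0 : Module.finrank (ZMod 2) V = 0 := Module.finrank_zero_of_subsingleton
    rw [← hrank, h0]
    exact Even.zero
  push_neg at htriv
  obtain ⟨x, hx⟩ := htriv
  have h2one : ∀ a : ZMod 2, a ≠ 0 → a = 1 := by decide
  have h2eq : ∀ a b : ZMod 2, a + b = 0 → a = b := by decide
  obtain ⟨y, hy⟩ : ∃ y, φ x y ≠ 0 := by
    by_contra h; push_neg at h; exact hx (hnd.1 x h)
  have hxy1 : φ x y = 1 := h2one _ hy
  have hsy : ∀ u v : V, φ u v = φ v u := by
    intro u v
    have h0 := halt (u + v)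
    simp only [map_add, LinearMap.add_apply, halt u, halt v, add_zero, zero_add] at h0
    exact (h2eq _ _ h0).symm
  have hyx1 : φ y x = 1 := by rw [← hsy]; exact hxy1
  set W : Submodule (ZMod 2) V := Submodule.span (ZMod 2) {x, y} with hWdef
  have li : LinearIndependent (ZMod 2) ![x, y] := by
    rw [LinearIndependent.pair_iff]
    intro s t hst
    have e1 : φ (s • x + t • y) y = 0 := by rw [hst]; simp
    have e2 : φ (s • x + t • y) x = 0 := by rw [hst]; simp
    simp only [map_add, map_smul, LinearMap.add_apply, LinearMap.smul_apply,
      smul_eq_mul, hxy1, hyx1, halt x, halt y, mul_one, mul_zero, add_zero, zero_add] at e1 e2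
    exact ⟨e1, e2⟩
  have hrange : Set.range ![x, y] = {x, y} := by
    ext z
    simp [Fin.exists_fin_two]
    tauto
  have hW2 : Module.finrank (ZMod 2) W = 2 := by
    rw [hWdef, ← hrange, finrank_span_eq_card li, Fintype.card_fin]
  have hrefl : φ.IsRefl := fun u v h => by rw [hsy v u]; exact h
  have hWnd : (φ.restrict W).Nondegenerate := by
    refine (LinearMap.IsRefl.nondegenerate_iff_separatingLeft
      ((LinearMap.BilinForm.IsSymm.restrict ⟨hsy⟩ W).isRefl)).mpr ?_
    rintro ⟨w, hw⟩ hww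
    obtain ⟨s, t, hst⟩ := Submodule.mem_span_pair.mp hw
    have hxW : x ∈ W := Submodule.subset_span (by simp)
    have hyW : y ∈ W := Submodule.subset_span (by simp)
    have e1 := hww ⟨y, hyW⟩
    have e2 := hww ⟨x, hxW⟩
    simp only [LinearMap.BilinForm.restrict_apply] at e1 e2
    rw [← hst] at e1 e2
    simp only [map_add, map_smul, LinearMap.add_apply, LinearMap.smul_apply,
      LinearMap.domRestrict_apply, smul_eq_mul, hxy1, hyx1, halt x, halt y,
      mul_one, mul_zero, add_zero, zero_add] at e1 e2
    ext
    simp [← hst, e1, e2]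
  have hcompl : IsCompl W (φ.orthogonal W) :=
    (LinearMap.BilinForm.restrict_nondegenerate_iff_isCompl_orthogonal hrefl).mp hWnd
  set S := φ.orthogonal W with hSdef
  have hsum : Module.finrank (ZMod 2) W + Module.finrank (ZMod 2) S =
      Module.finrank (ZMod 2) V := Submodule.finrank_add_eq_of_isCompl hcompl
  have hSnd : (φ.restrict S).Nondegenerate := by
    refine (LinearMap.IsRefl.nondegenerate_iff_separatingLeft
      ((LinearMap.BilinForm.IsSymm.restrict ⟨hsy⟩ S).isRefl)).mpr ?_
    rintro ⟨s, hs⟩ hss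
    have hall : ∀ v : V, φ s v = 0 := by
      intro v
      have hv : v ∈ W ⊔ S := by rw [hcompl.sup_eq_top]; trivial
      obtain ⟨w, hwW, t, htS, rfl⟩ := Submodule.mem_sup.mp hv
      have h1 : φ s w = 0 := by rw [hsy]; exact hs w hwW
      have h2 : φ s t = 0 := by
        have := hss ⟨t, htS⟩
        simpa using this
      rw [map_add, h1, h2, add_zero]
    exact Subtype.ext (hnd.1 s hall)
  have hSalt : ∀ u : S, (φ.restrict S) u u = 0 := fun u => by
    simpa using halt u.1
  have hEvenS : Even (Module.finrank (ZMod 2) S) := by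
    refine ih (Module.finrank (ZMod 2) S) ?_ S rfl (φ.restrict S) hSalt hSnd
    omega
  obtain ⟨c, hc⟩ := hEvenS
  exact ⟨c + 1, by omega⟩

end AuxEven

/-- The shadow `Δ = {C a + E_{a,a}}` of a symplectic spread-set with canonical
labeling `C` is a DHO-set: skew-symmetric operators whose pairwise sums have
rank `n - 1`, the kernels running over all 1-spaces. -/
theorem shadow_is_DHO_set
    (n : ℕ) (hodd : Odd n)
    (U : Type*) [AddCommGroup U] [Module (ZMod 2) U] [FiniteDimensional (ZMod 2) U]
    (hn : Module.finrank (ZMod 2) U = n)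
    (B : LinearMap.BilinForm (ZMod 2) U) (hsymm : B.IsSymm) (hnd : B.Nondegenerate)
    (C : U → (U →ₗ[ZMod 2] U)) (hC0 : C 0 = 0) (hCinj : Function.Injective C)
    (hsa : ∀ a : U, IsSelfAdjOp B (C a))
    (hinv : ∀ a b : U, a ≠ b → Function.Bijective (C a + C b))
    (hskew : ∀ a : U, IsSkewOp B (C a + Eop B a a)) :
    (∀ a : U, IsSkewOp B (C a + Eop B a a)) ∧
    (∀ a b : U, a ≠ b →
      Module.finrank (ZMod 2)
        (LinearMap.range ((C a + Eop B a a) + (C b + Eop B b b))) = n - 1) ∧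
    (∀ a : U,
      {P : Submodule (ZMod 2) U | ∃ b : U, b ≠ a ∧
          P = LinearMap.ker ((C a + Eop B a a) + (C b + Eop B b b))} =
        {P : Submodule (ZMod 2) U | Module.finrank (ZMod 2) P = 1}) := by
  classical
  have hfinU : Finite U := Module.finite_of_finite (ZMod 2)
  have h2cases : ∀ a : ZMod 2, a = 0 ∨ a = 1 := by decide
  have h2eq : ∀ a b : ZMod 2, a + b = 0 → a = b := by decide
  have hsq : ∀ c : ZMod 2, c * c = c := by decide
  have hcancel : ∀ p q : ZMod 2, p = p + q → q = 0 := by decide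
  have hcancel' : ∀ p q : ZMod 2, p = q + p → q = 0 := by decide
  have hchar : ∀ u : U, u + u = 0 := by
    intro u
    calc u + u = (2 : ZMod 2) • u := by rw [two_smul]
    _ = (0 : ZMod 2) • u := by rw [show (2 : ZMod 2) = 0 from rfl]
    _ = 0 := zero_smul _ _
  have haddc : ∀ u v : U, u + v = v → u = 0 := by
    intro u v h
    calc u = u + (v + v) := by rw [hchar, add_zero]
    _ = (u + v) + v := by rw [add_assoc]
    _ = v + v := by rw [h]
    _ = 0 := hchar v
  have hBsy : ∀ u v : U, B u v = B v u := by
    intro u v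
    have := hsymm.eq u v
    simpa using this
  have hEapp : ∀ (a x : U), Eop B a a x = B x a • a := by
    intro a x
    simp [Eop, LinearMap.smulRight_apply, LinearMap.flip_apply]
  have hBadd : ∀ (a b x : U),
      ((C a + Eop B a a) + (C b + Eop B b b)) x
        = (C a x + C b x) + (B x a • a + B x b • b) := by
    intro a b x
    simp only [LinearMap.add_apply, hEapp]
    abel
  have haddeq : ∀ u v : U, u + v = 0 ↔ u = v := by
    intro u v
    constructor
    · intro h
      calc u = u + (v + v) := by rw [hchar, add_zero]
      _ = (u + v) + v := by rw [add_assoc]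
      _ = 0 + v := by rw [h]
      _ = v := zero_add v
    · intro h; rw [h, hchar]
  have hmemker : ∀ (a b x : U),
      x ∈ LinearMap.ker ((C a + Eop B a a) + (C b + Eop B b b)) ↔
        C a x + C b x = B x a • a + B x b • b := by
    intro a b x
    rw [LinearMap.mem_ker, hBadd, haddeq]
  have halt' : ∀ (a b x : U), B x (((C a + Eop B a a) + (C b + Eop B b b)) x) = 0 := by
    intro a b x
    rw [LinearMap.add_apply, map_add, hskew a x, hskew b x, add_zero]
  have hskewM : ∀ (a b w : U), B w ((C a + C b) w) = B w a + B w b := by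
    intro a b w
    have h0 := halt' a b w
    rw [hBadd a b w] at h0
    simp only [map_add, map_smul, smul_eq_mul, hsq] at h0
    have h0' : B w (C a w + C b w) + (B w a + B w b) = 0 := by
      rw [map_add]
      linear_combination h0
    have := h2eq _ _ h0'
    rw [← this, LinearMap.add_apply, map_add]
  -- self-adjointness facts
  have hsaE : ∀ a : U, IsSelfAdjOp B (Eop B a a) := by
    intro a x y
    rw [hEapp, hEapp, map_smul]
    simp only [LinearMap.smul_apply, map_smul, smul_eq_mul]
    rw [hBsy a y, hBsy x a, mul_comm]
  have hsaD : ∀ (a b x y : U),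
      B (((C a + Eop B a a) + (C b + Eop B b b)) x) y
        = B x (((C a + Eop B a a) + (C b + Eop B b b)) y) := by
    intro a b x y
    simp only [LinearMap.add_apply, map_add]
    rw [hsa a x y, hsa b x y, hsaE a x y, hsaE b x y]
  have hφsymm : ∀ (a b x y : U),
      B x (((C a + Eop B a a) + (C b + Eop B b b)) y)
        = B y (((C a + Eop B a a) + (C b + Eop B b b)) x) := by
    intro a b x y
    rw [← hsaD a b y x, hBsy]
  -- key dimension computation
  have hker1 : ∀ a b : U, a ≠ b →
      Module.finrank (ZMod 2)
        (LinearMap.ker ((C a + Eop B a a) + (C b + Eop B b b))) = 1 := by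
    intro a b hab
    -- upper bound 2
    have hle : LinearMap.ker ((C a + Eop B a a) + (C b + Eop B b b)) ≤
        Submodule.comap ((C a + C b) : U →ₗ[ZMod 2] U)
          (Submodule.span (ZMod 2) {a, b}) := by
      intro x hx
      rw [Submodule.mem_comap, Submodule.mem_span_pair]
      refine ⟨B x a, B x b, ?_⟩
      rw [LinearMap.add_apply]
      exact ((hmemker a b x).mp hx).symm
    let e : U ≃ₗ[ZMod 2] U := LinearEquiv.ofBijective (C a + C b) (hinv a b hab)
    have hcomap : Submodule.comap ((C a + C b) : U →ₗ[ZMod 2] U)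
        (Submodule.span (ZMod 2) {a, b})
        = Submodule.map (e.symm : U →ₗ[ZMod 2] U) (Submodule.span (ZMod 2) {a, b}) :=
      Submodule.comap_equiv_eq_map_symm e _
    have hk2 : Module.finrank (ZMod 2)
        (LinearMap.ker ((C a + Eop B a a) + (C b + Eop B b b))) ≤ 2 := by
      refine le_trans (Submodule.finrank_mono hle) ?_
      have hfr : Module.finrank (ZMod 2)
          (Submodule.map (e.symm : U →ₗ[ZMod 2] U) (Submodule.span (ZMod 2) {a, b}))
          = Module.finrank (ZMod 2) (Submodule.span (ZMod 2) ({a, b} : Set U)) :=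
        LinearEquiv.finrank_map_eq e.symm _
      rw [hcomap, hfr]
      refine le_trans (finrank_span_le_card _) ?_
      classical
      have : ({a, b} : Set U).toFinset ⊆ {a, b} := by
        intro z hz
        simp only [Set.toFinset_insert, Set.toFinset_singleton] at hz
        exact hz
      calc ({a, b} : Set U).toFinset.card ≤ ({a, b} : Finset U).card :=
            Finset.card_le_card this
      _ ≤ 2 := Finset.card_insert_le a {b} |>.trans (by simp)
    -- parity
    obtain ⟨S, hS⟩ := Submodule.exists_isCompl
      (LinearMap.ker ((C a + Eop B a a) + (C b + Eop B b b)))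
    have hSnd : (LinearMap.BilinForm.restrict
        (B.compl₂ ((C a + Eop B a a) + (C b + Eop B b b))) S).Nondegenerate := by
      refine (LinearMap.IsRefl.nondegenerate_iff_separatingLeft
        ((LinearMap.BilinForm.IsSymm.restrict
          (B := B.compl₂ ((C a + Eop B a a) + (C b + Eop B b b)))
          ⟨fun x y => hφsymm a b x y⟩ S).isRefl)).mpr ?_
      rintro ⟨s, hs⟩ hss
      have hall : ∀ v : U, B s (((C a + Eop B a a) + (C b + Eop B b b)) v) = 0 := by
        intro v
        have hv : v ∈ LinearMap.ker ((C a + Eop B a a) + (C b + Eop B b b)) ⊔ S := by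
          rw [hS.sup_eq_top]; trivial
        obtain ⟨w, hwW, t, htS, rfl⟩ := Submodule.mem_sup.mp hv
        have h1 : B s (((C a + Eop B a a) + (C b + Eop B b b)) w) = 0 := by
          rw [LinearMap.mem_ker.mp hwW, map_zero]
        have h2 : B s (((C a + Eop B a a) + (C b + Eop B b b)) t) = 0 := by
          have := hss ⟨t, htS⟩
          simpa only [LinearMap.BilinForm.restrict_apply, LinearMap.domRestrict_apply,
            LinearMap.compl₂_apply] using this
        rw [map_add, map_add, h1, h2, add_zero]
      have hDs : ((C a + Eop B a a) + (C b + Eop B b b)) s = 0 := by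
        apply hnd.1
        intro v
        rw [hBsy, ← hφsymm a b s v]
        exact hall v
      have hmem : s ∈ LinearMap.ker ((C a + Eop B a a) + (C b + Eop B b b)) ⊓ S :=
        ⟨LinearMap.mem_ker.mpr hDs, hs⟩
      rw [hS.inf_eq_bot] at hmem
      exact Subtype.ext hmem
    have hSalt : ∀ u : S, (LinearMap.BilinForm.restrict
        (B.compl₂ ((C a + Eop B a a) + (C b + Eop B b b))) S) u u = 0 := by
      intro u
      simp only [LinearMap.BilinForm.restrict_apply, LinearMap.compl₂_apply]
      exact halt' a b u.1
    have hEvenS : Even (Module.finrank (ZMod 2) S) :=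
      alt_nondeg_even_finrank _ S rfl _ hSalt hSnd
    have hsum := Submodule.finrank_add_eq_of_isCompl hS
    rw [hn] at hsum
    obtain ⟨c, hc⟩ := hEvenS
    obtain ⟨d, hd⟩ := hodd
    omega
  -- key lemma: nonzero kernel vectors have B x a + B x b = 1
  have hK2 : ∀ a b : U, a ≠ b → ∀ x : U, x ≠ 0 →
      x ∈ LinearMap.ker ((C a + Eop B a a) + (C b + Eop B b b)) →
      B x a + B x b = 1 := by
    intro a b hab x hx hxk
    have hMx : C a x + C b x = B x a • a + B x b • b := (hmemker a b x).mp hxk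
    rcases h2cases (B x a) with ha0 | ha1 <;> rcases h2cases (B x b) with hb0 | hb1
    · exfalso
      have hz : (C a + C b) x = 0 := by
        rw [LinearMap.add_apply, hMx, ha0, hb0]; simp
      have h0 : (C a + C b) (0 : U) = 0 := map_zero _
      exact hx ((hinv a b hab).injective (hz.trans h0.symm))
    · rw [ha0, hb1, zero_add]
    · rw [ha1, hb0, add_zero]
    · exfalso
      have hMx' : (C a + C b) x = a + b := by
        rw [LinearMap.add_apply, hMx, ha1, hb1, one_smul, one_smul]
      have ha0' : a ≠ 0 := by rintro rfl; rw [map_zero] at ha1; exact one_ne_zero ha1.symm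
      have hb0' : b ≠ 0 := by rintro rfl; rw [map_zero] at hb1; exact one_ne_zero hb1.symm
      let e : U ≃ₗ[ZMod 2] U := LinearEquiv.ofBijective (C a + C b) (hinv a b hab)
      set y := e.symm a with hydef
      set z := e.symm b with hzdef
      have hey : (C a + C b) y = a := e.apply_symm_apply a
      have hez : (C a + C b) z = b := e.apply_symm_apply b
      have hxyz : x = y + z := by
        apply (hinv a b hab).injective
        rw [map_add, hey, hez, hMx']
      have hyb : B y b = 0 := by
        have h := hskewM a b y
        rw [hey] at h
        exact hcancel _ _ h
      have hza : B z a = 0 := by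
        have h := hskewM a b z
        rw [hez] at h
        exact hcancel' _ _ h
      have hya : B y a = 1 := by
        have h : B x a = B y a + B z a := by
          rw [hxyz, map_add, LinearMap.add_apply]
        rw [ha1, hza, add_zero] at h
        exact h.symm
      have hzb : B z b = 1 := by
        have h : B x b = B y b + B z b := by
          rw [hxyz, map_add, LinearMap.add_apply]
        rw [hb1, hyb, zero_add] at h
        exact h.symm
      have hyk : y ∈ LinearMap.ker ((C a + Eop B a a) + (C b + Eop B b b)) := by
        rw [hmemker, hya, hyb, one_smul, zero_smul, add_zero, ← LinearMap.add_apply]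
        exact hey
      have hzk : z ∈ LinearMap.ker ((C a + Eop B a a) + (C b + Eop B b b)) := by
        rw [hmemker, hza, hzb, one_smul, zero_smul, zero_add, ← LinearMap.add_apply]
        exact hez
      have hkerx : LinearMap.ker ((C a + Eop B a a) + (C b + Eop B b b))
          = Submodule.span (ZMod 2) {x} := by
        symm
        apply Submodule.eq_of_le_of_finrank_eq
        · rw [Submodule.span_le, Set.singleton_subset_iff]; exact hxk
        · rw [finrank_span_singleton hx, hker1 a b hab]
      have hspan : ∀ w : U, w ≠ 0 →
          w ∈ Submodule.span (ZMod 2) ({x} : Set U) → w = x := by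
        intro w hw0 hwm
        obtain ⟨c, hc⟩ := Submodule.mem_span_singleton.mp hwm
        rcases h2cases c with h | h
        · exfalso; apply hw0; rw [← hc, h, zero_smul]
        · rw [← hc, h, one_smul]
      have hy0 : y ≠ 0 := by
        intro h
        apply ha0'
        rw [← hey, h, map_zero]
      have hz0 : z ≠ 0 := by
        intro h
        apply hb0'
        rw [← hez, h, map_zero]
      have hyx : y = x := hspan y hy0 (hkerx ▸ hyk)
      have hzx : z = x := hspan z hz0 (hkerx ▸ hzk)
      apply hab
      calc a = (C a + C b) y := hey.symm
      _ = (C a + C b) z := by rw [hyx, hzx]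
      _ = b := hez
  -- injectivity of kernels
  have hinj : ∀ a b b' : U, b ≠ a → b' ≠ a → b ≠ b' →
      LinearMap.ker ((C a + Eop B a a) + (C b + Eop B b b)) ≠
        LinearMap.ker ((C a + Eop B a a) + (C b' + Eop B b' b')) := by
    intro a b b' hb hb' hbb' heq
    have h1 := hker1 a b (Ne.symm hb)
    obtain ⟨x, hxk, hx0⟩ : ∃ x : U,
        x ∈ LinearMap.ker ((C a + Eop B a a) + (C b + Eop B b b)) ∧ x ≠ 0 := by
      apply Submodule.exists_mem_ne_zero_of_ne_bot
      intro hbot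
      rw [hbot, finrank_bot] at h1
      exact absurd h1 (by norm_num)
    have hxk' : x ∈ LinearMap.ker ((C a + Eop B a a) + (C b' + Eop B b' b')) :=
      heq ▸ hxk
    have hxk'' : x ∈ LinearMap.ker ((C b + Eop B b b) + (C b' + Eop B b' b')) := by
      rw [LinearMap.mem_ker]
      have key : ((C b + Eop B b b) + (C b' + Eop B b' b')) x
            + ((C a + Eop B a a) x + (C a + Eop B a a) x)
          = (((C a + Eop B a a) + (C b + Eop B b b)) x
              + ((C a + Eop B a a) + (C b' + Eop B b' b')) x) := by
        simp only [LinearMap.add_apply]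
        abel
      rw [hchar, add_zero] at key
      rw [key, LinearMap.mem_ker.mp hxk, LinearMap.mem_ker.mp hxk', add_zero]
    have e1 := hK2 a b (Ne.symm hb) x hx0 hxk
    have e2 := hK2 a b' (Ne.symm hb') x hx0 hxk'
    have e3 := hK2 b b' hbb' x hx0 hxk''
    have hcontra : ∀ p q r : ZMod 2, p + q = 1 → p + r = 1 → q + r = 1 → False := by
      decide
    exact hcontra _ _ _ e1 e2 e3
  -- surjectivity onto 1-spaces
  have hsurj : ∀ a : U, ∀ P : Submodule (ZMod 2) U,
      Module.finrank (ZMod 2) P = 1 →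
      ∃ b : U, b ≠ a ∧
        P = LinearMap.ker ((C a + Eop B a a) + (C b + Eop B b b)) := by
    intro a P hP
    obtain ⟨x, hxP, hx0⟩ : ∃ x : U, x ∈ P ∧ x ≠ 0 := by
      apply Submodule.exists_mem_ne_zero_of_ne_bot
      intro hbot
      rw [hbot, finrank_bot] at hP
      exact absurd hP (by norm_num)
    have hPx : P = Submodule.span (ZMod 2) {x} := by
      symm
      apply Submodule.eq_of_le_of_finrank_eq
      · rw [Submodule.span_le, Set.singleton_subset_iff]; exact hxP
      · rw [finrank_span_singleton hx0, hP]
    have hgen : ∀ b : U, b ≠ a → ∃ y : U, y ≠ 0 ∧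
        LinearMap.ker ((C a + Eop B a a) + (C b + Eop B b b))
          = Submodule.span (ZMod 2) {y} := by
      intro b hb
      have h1 := hker1 a b (Ne.symm hb)
      obtain ⟨y, hyk, hy0⟩ : ∃ y : U,
          y ∈ LinearMap.ker ((C a + Eop B a a) + (C b + Eop B b b)) ∧ y ≠ 0 := by
        apply Submodule.exists_mem_ne_zero_of_ne_bot
        intro hbot
        rw [hbot, finrank_bot] at h1
        exact absurd h1 (by norm_num)
      refine ⟨y, hy0, ?_⟩
      symm
      apply Submodule.eq_of_le_of_finrank_eq
      · rw [Submodule.span_le, Set.singleton_subset_iff]; exact hyk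
      · rw [finrank_span_singleton hy0, h1]
    let f : {b : U // b ≠ a} → {y : U // y ≠ 0} := fun b =>
      ⟨(hgen b.1 b.2).choose, (hgen b.1 b.2).choose_spec.1⟩
    have hf : ∀ b : {b : U // b ≠ a},
        LinearMap.ker ((C a + Eop B a a) + (C b.1 + Eop B b.1 b.1))
          = Submodule.span (ZMod 2) {(f b).1} :=
      fun b => (hgen b.1 b.2).choose_spec.2
    have hfinj : Function.Injective f := by
      intro b b' h
      by_contra hne
      have hne' : b.1 ≠ b'.1 := fun hh => hne (Subtype.ext hh)
      apply hinj a b.1 b'.1 b.2 b'.2 hne'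
      rw [hf b, hf b']
      rw [show (f b).1 = (f b').1 from congrArg Subtype.val h]
    let eqv : {b : U // b ≠ a} ≃ {y : U // y ≠ 0} :=
      { toFun := fun b => ⟨b.1 + a, fun h => b.2 (by
          have h2 : b.1 + a = a + a := by rw [h, hchar]
          exact add_right_cancel h2)⟩
        invFun := fun y => ⟨y.1 + a, fun h => y.2 (haddc _ _ h)⟩
        left_inv := fun b => Subtype.ext (by
          show (b.1 + a) + a = b.1
          rw [add_assoc, hchar, add_zero])
        right_inv := fun y => Subtype.ext (by
          show (y.1 + a) + a = y.1
          rw [add_assoc, hchar, add_zero]) }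
    have hfsurj : Function.Surjective f :=
      (Finite.injective_iff_surjective_of_equiv eqv).mp hfinj
    obtain ⟨b, hb⟩ := hfsurj ⟨x, hx0⟩
    refine ⟨b.1, b.2, ?_⟩
    rw [hPx, hf b, show (f b).1 = x from congrArg Subtype.val hb]
  refine ⟨hskew, ?_, ?_⟩
  · intro a b hab
    have h := LinearMap.finrank_range_add_finrank_ker
      ((C a + Eop B a a) + (C b + Eop B b b))
    rw [hn, hker1 a b hab] at h
    omega
  · intro a
    ext P
    simp only [Set.mem_setOf_eq]
    constructor
    · rintro ⟨b, hb, rfl⟩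
      exact hker1 a b (Ne.symm hb)
    · intro hP
      obtain ⟨b, hb, hPb⟩ := hsurj a P hP
      exact ⟨b, hb, hPb⟩
end

section
/- Let F = F_{2^n} with n odd, viewed as an F_2-space with bilinear form b(x,y) = Tr(xy) (absolute trace). For a ∈ F define B(a): F → F by xB(a) = a^2 x + Tr(xa)a. Then {B(a) : a ∈ F} is a DHO-set: each B(a) is F_2-linear and skew-symmetric with respect to b; rk(B(a)+B(b)) = n−1 for distinct a, b; and for fixed a the kernels ker(B(a)+B(b)), b ≠ a, are exactly all 1-dimensional F_2-subspaces of F. -/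
open Module LinearMap

namespace DHOShadow

variable (n : ℕ)

local notation "K" => GaloisField 2 n

noncomputable abbrev tr : K →ₗ[ZMod 2] ZMod 2 := Algebra.trace (ZMod 2) K

/-- frobenius as a `ZMod 2`-algebra equivalence -/
noncomputable def frob : K ≃ₐ[ZMod 2] K :=
  AlgEquiv.ofRingEquiv (f := frobeniusEquiv K 2)
    (fun x => by
      rw [frobeniusEquiv_def, ← map_pow]
      congr 1
      exact ZMod.pow_card x)

lemma tr_sq (x : K) : tr n (x ^ 2) = tr n x := by
  have := Algebra.trace_eq_of_algEquiv (frob n) x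
  simp [frob, AlgEquiv.ofRingEquiv, frobeniusEquiv_def] at this
  exact this

lemma tr_one (hn : n ≠ 0) (hodd : Odd n) : tr n 1 = 1 := by
  have h1 : (1 : K) = algebraMap (ZMod 2) K 1 := by simp
  rw [show (tr n 1 : ZMod 2) = Algebra.trace (ZMod 2) K 1 from rfl, h1,
    Algebra.trace_algebraMap, GaloisField.finrank 2 hn]
  rw [nsmul_eq_mul, mul_one, ← ZMod.natCast_mod n 2, Nat.odd_iff.mp hodd]
  rfl

lemma two01 : ∀ z : ZMod 2, z = 0 ∨ z = 1 := by decide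

lemma zadd_self : ∀ z : ZMod 2, z + z = 0 := by decide

lemma add_self (x : K) : x + x = 0 := CharTwo.add_self_eq_zero x

lemma add_eq_zero_iff (x y : K) : x + y = 0 ↔ x = y := by
  constructor
  · intro h
    have := eq_neg_of_add_eq_zero_left h
    rwa [CharTwo.neg_eq] at this
  · rintro rfl; exact add_self n x

/-- The Artin-Schreier map as a linear map. -/
noncomputable def AS : K →ₗ[ZMod 2] K :=
  AddMonoidHom.toZModLinearMap 2
    { toFun := fun e => e ^ 2 + e
      map_zero' := by simp
      map_add' := fun x y => by
        show (x + y) ^ 2 + (x + y) = (x ^ 2 + x) + (y ^ 2 + y)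
        rw [CharTwo.add_sq]; ring }

lemma AS_apply (e : K) : AS n e = e ^ 2 + e := rfl

lemma ker_AS : LinearMap.ker (AS n) = Submodule.span (ZMod 2) {(1 : K)} := by
  ext x
  simp only [LinearMap.mem_ker, AS_apply, Submodule.mem_span_singleton]
  constructor
  · intro h
    have hx : x * (x + 1) = 0 := by rw [mul_add, mul_one, ← sq]; exact h
    rcases mul_eq_zero.mp hx with h0 | h1
    · exact ⟨0, by simp [h0]⟩
    · exact ⟨1, by rw [one_smul]; exact ((add_eq_zero_iff n x 1).mp h1).symm⟩
  · rintro ⟨c, rfl⟩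
    rcases two01 c with rfl | rfl <;> simp [add_self n 1]

lemma finrank_K (hn : n ≠ 0) : finrank (ZMod 2) K = n := GaloisField.finrank 2 hn

lemma finrank_ker_tr (hn : n ≠ 0) (hodd : Odd n) :
    finrank (ZMod 2) (LinearMap.ker (tr n)) = n - 1 := by
  have hsurj : LinearMap.range (tr n) = ⊤ := by
    rw [eq_top_iff]
    intro z _
    rcases two01 z with rfl | rfl
    · exact Submodule.zero_mem _
    · exact ⟨1, tr_one n hn hodd⟩
  have := LinearMap.finrank_range_add_finrank_ker (tr n)
  rw [hsurj, finrank_top, finrank_self, finrank_K n hn] at this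
  omega

lemma range_AS (hn : n ≠ 0) (hodd : Odd n) :
    LinearMap.range (AS n) = LinearMap.ker (tr n) := by
  have hle : LinearMap.range (AS n) ≤ LinearMap.ker (tr n) := by
    rintro _ ⟨e, rfl⟩
    simp only [LinearMap.mem_ker, AS_apply, map_add, tr_sq]
    exact zadd_self _
  refine Submodule.eq_of_le_of_finrank_eq hle ?_
  have h1 := LinearMap.finrank_range_add_finrank_ker (AS n)
  rw [ker_AS, finrank_K n hn, finrank_span_singleton (one_ne_zero)] at h1
  rw [finrank_ker_tr n hn hodd]
  omega

lemma artin_schreier (hn : n ≠ 0) (hodd : Odd n) (z : K) (hz : tr n z = 0) :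
    ∃ e : K, e ^ 2 + e = z ∧ tr n e = 1 := by
  have : z ∈ LinearMap.range (AS n) := by rw [range_AS n hn hodd]; exact hz
  obtain ⟨e, he⟩ := this
  rcases two01 (tr n e) with h | h
  · refine ⟨e + 1, ?_, ?_⟩
    · rw [CharTwo.add_sq]
      have he' : e ^ 2 + e = z := he
      rw [one_pow]
      calc e ^ 2 + 1 + (e + 1) = e ^ 2 + e + (1 + 1) := by ring
        _ = z := by rw [add_self n 1, add_zero, he']
    · rw [map_add, h, tr_one n hn hodd, zero_add]
  · exact ⟨e, he, h⟩

/-- The shadow operators. -/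
noncomputable def B (a : K) : K →ₗ[ZMod 2] K :=
  LinearMap.mulLeft (ZMod 2) (a ^ 2) +
    (tr n ∘ₗ LinearMap.mulRight (ZMod 2) a).smulRight a

lemma B_apply (a y : K) : B n a y = a ^ 2 * y + tr n (y * a) • a := by
  simp [B, LinearMap.smulRight_apply]

lemma BB_apply (a c y : K) :
    (B n a + B n c) y = (a + c) ^ 2 * y + (tr n (y * a) • a + tr n (y * c) • c) := by
  rw [LinearMap.add_apply, B_apply, B_apply, CharTwo.add_sq]
  ring

/-- The distinguished kernel vector of `B a + B c`. -/
noncomputable def kv (a c : K) : K :=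
  if tr n (a * (a + c)⁻¹) = 1 then a * ((a + c)⁻¹) ^ 2 else c * ((a + c)⁻¹) ^ 2

lemma tr_smul (t : ZMod 2) (x y : K) : tr n (x * (t • y)) = t * tr n (x * y) := by
  rcases two01 t with rfl | rfl <;> simp

lemma d_ne {a c : K} (hac : a ≠ c) : a + c ≠ 0 :=
  fun h => hac ((add_eq_zero_iff n a c).mp h)

lemma c_decomp (a c : K) : c = (a + c) + a := by
  rw [add_comm a c, add_assoc, add_self, add_zero]

lemma tr_sum {a c : K} (hac : a ≠ c) :
    tr n (a * (a + c)⁻¹) + tr n (c * (a + c)⁻¹) = tr n 1 := by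
  rw [← map_add, ← add_mul, mul_inv_cancel₀ (d_ne n hac)]

lemma tr_c_inv (hn : n ≠ 0) (hodd : Odd n) {a c : K} (hac : a ≠ c)
    (h : tr n (a * (a + c)⁻¹) = 0) : tr n (c * (a + c)⁻¹) = 1 := by
  have := tr_sum n hac
  rw [h, zero_add, tr_one n hn hodd] at this
  exact this

lemma tr_prod {a c : K} (hac : a ≠ c) : tr n (a * c * ((a + c)⁻¹) ^ 2) = 0 := by
  set u := a * (a + c)⁻¹ with hu
  have hc : c * (a + c)⁻¹ = 1 + u := by
    calc c * (a + c)⁻¹ = ((a + c) + a) * (a + c)⁻¹ := by rw [← c_decomp n a c]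
      _ = 1 + u := by rw [add_mul, mul_inv_cancel₀ (d_ne n hac), hu]
  have h2 : a * c * ((a + c)⁻¹) ^ 2 = u * (1 + u) := by
    rw [← hc, hu]; ring
  rw [h2, mul_add, mul_one, ← sq, map_add, tr_sq]
  exact zadd_self _

lemma kv_ne_zero (hn : n ≠ 0) (hodd : Odd n) {a c : K} (hac : a ≠ c) : kv n a c ≠ 0 := by
  have hdinv : ((a + c)⁻¹) ^ 2 ≠ 0 := pow_ne_zero 2 (inv_ne_zero (d_ne n hac))
  unfold kv
  split_ifs with h
  · intro h0
    rcases mul_eq_zero.mp h0 with h1 | h1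
    · rw [h1] at h; simp at h
    · exact hdinv h1
  · intro h0
    rcases two01 (tr n (a * (a + c)⁻¹)) with h2 | h2
    · have h3 := tr_c_inv n hn hodd hac h2
      rcases mul_eq_zero.mp h0 with h1 | h1
      · rw [h1] at h3; simp at h3
      · exact hdinv h1
    · exact h h2

lemma kv_mem (hn : n ≠ 0) (hodd : Odd n) {a c : K} (hac : a ≠ c) :
    (B n a + B n c) (kv n a c) = 0 := by
  have hd := d_ne n hac
  have hd2 : ((a + c)) ^ 2 ≠ 0 := pow_ne_zero 2 hd
  rw [BB_apply]
  unfold kv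
  split_ifs with h
  · have e1 : (a + c) ^ 2 * (a * ((a + c)⁻¹) ^ 2) = a := by
      field_simp
    have e2 : tr n ((a * ((a + c)⁻¹) ^ 2) * a) = 1 := by
      have : (a * ((a + c)⁻¹) ^ 2) * a = (a * (a + c)⁻¹) ^ 2 := by ring
      rw [this, tr_sq, h]
    have e3 : tr n ((a * ((a + c)⁻¹) ^ 2) * c) = 0 := by
      have : (a * ((a + c)⁻¹) ^ 2) * c = a * c * ((a + c)⁻¹) ^ 2 := by ring
      rw [this, tr_prod n hac]
    rw [e1, e2, e3, one_smul, zero_smul, add_zero, add_self]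
  · have h0 : tr n (a * (a + c)⁻¹) = 0 := (two01 _).resolve_right h
    have h1 := tr_c_inv n hn hodd hac h0
    have e1 : (a + c) ^ 2 * (c * ((a + c)⁻¹) ^ 2) = c := by
      field_simp
    have e2 : tr n ((c * ((a + c)⁻¹) ^ 2) * c) = 1 := by
      have : (c * ((a + c)⁻¹) ^ 2) * c = (c * (a + c)⁻¹) ^ 2 := by ring
      rw [this, tr_sq, h1]
    have e3 : tr n ((c * ((a + c)⁻¹) ^ 2) * a) = 0 := by
      have : (c * ((a + c)⁻¹) ^ 2) * a = a * c * ((a + c)⁻¹) ^ 2 := by ring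
      rw [this, tr_prod n hac]
    rw [e1, e2, e3, one_smul, zero_smul, zero_add, add_self]

lemma ker_BB (hn : n ≠ 0) (hodd : Odd n) {a c : K} (hac : a ≠ c) :
    LinearMap.ker (B n a + B n c) = Submodule.span (ZMod 2) {kv n a c} := by
  have hd := d_ne n hac
  have hd2 : ((a + c) : K) ^ 2 ≠ 0 := pow_ne_zero 2 hd
  apply le_antisymm
  · intro y hy
    rw [LinearMap.mem_ker, BB_apply] at hy
    rw [Submodule.mem_span_singleton]
    rcases two01 (tr n (y * a)) with ha0 | ha1 <;>
      rcases two01 (tr n (y * c)) with hc0 | hc1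
    · rw [ha0, hc0, zero_smul, zero_smul, add_zero, add_zero] at hy
      rcases mul_eq_zero.mp hy with h1 | h1
      · exact absurd h1 hd2
      · exact ⟨0, by rw [zero_smul, h1]⟩
    · rw [ha0, hc1, zero_smul, zero_add, one_smul] at hy
      have hy' : y = c * ((a + c)⁻¹) ^ 2 := by
        have h2 : (a + c) ^ 2 * y = c := (add_eq_zero_iff n _ _).mp hy
        field_simp at h2 ⊢
        rw [mul_comm] at h2
        linear_combination h2
      have htr : tr n (c * (a + c)⁻¹) = 1 := by
        rw [hy'] at hc1
        have : (c * ((a + c)⁻¹) ^ 2) * c = (c * (a + c)⁻¹) ^ 2 := by ring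
        rw [this, tr_sq] at hc1
        exact hc1
      have hA : tr n (a * (a + c)⁻¹) = 0 := by
        rcases two01 (tr n (a * (a + c)⁻¹)) with h | h
        · exact h
        · exfalso
          have := tr_sum n hac
          rw [h, htr, tr_one n hn hodd] at this
          exact absurd this (by decide)
      refine ⟨1, ?_⟩
      rw [one_smul, kv, hA]
      rw [if_neg (by decide), hy']
    · rw [ha1, hc0, zero_smul, add_zero, one_smul] at hy
      have hy' : y = a * ((a + c)⁻¹) ^ 2 := by
        have h2 : (a + c) ^ 2 * y = a := (add_eq_zero_iff n _ _).mp hy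
        field_simp at h2 ⊢
        rw [mul_comm] at h2
        linear_combination h2
      have htr : tr n (a * (a + c)⁻¹) = 1 := by
        rw [hy'] at ha1
        have : (a * ((a + c)⁻¹) ^ 2) * a = (a * (a + c)⁻¹) ^ 2 := by ring
        rw [this, tr_sq] at ha1
        exact ha1
      refine ⟨1, ?_⟩
      rw [one_smul, kv, if_pos htr, hy']
    · exfalso
      rw [ha1, hc1, one_smul, one_smul] at hy
      have hy' : y = (a + c)⁻¹ := by
        have h2 : (a + c) ^ 2 * y = a + c := (add_eq_zero_iff n _ _).mp hy
        field_simp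
        have h3 : y * (a + c) * (a + c) = 1 * (a + c) := by linear_combination h2
        exact mul_right_cancel₀ hd h3
      rw [hy', mul_comm] at ha1 hc1
      have hsum := tr_sum n hac
      rw [ha1, hc1, tr_one n hn hodd] at hsum
      exact absurd hsum (by decide)
  · rw [Submodule.span_le, Set.singleton_subset_iff]
    exact kv_mem n hn hodd hac

lemma skew (a x : K) : tr n (x * B n a x) = 0 := by
  rw [B_apply, mul_add, map_add, tr_smul]
  have h1 : x * (a ^ 2 * x) = (x * a) ^ 2 := by ring
  rw [h1, tr_sq]
  rcases two01 (tr n (x * a)) with h | h <;> rw [h] <;> decide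

lemma finrank_ker_BB (hn : n ≠ 0) (hodd : Odd n) {a c : K} (hac : a ≠ c) :
    finrank (ZMod 2) (LinearMap.ker (B n a + B n c)) = 1 := by
  rw [ker_BB n hn hodd hac]
  exact finrank_span_singleton (kv_ne_zero n hn hodd hac)

lemma rank_BB (hn : n ≠ 0) (hodd : Odd n) {a c : K} (hac : a ≠ c) :
    finrank (ZMod 2) (LinearMap.range (B n a + B n c)) = n - 1 := by
  have h := LinearMap.finrank_range_add_finrank_ker (B n a + B n c)
  rw [finrank_K n hn, finrank_ker_BB n hn hodd hac] at h
  omega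

lemma exists_c (hn : n ≠ 0) (hodd : Odd n) (a : K) {x : K} (hx : x ≠ 0) :
    ∃ c : K, c ≠ a ∧ (B n a + B n c) x = 0 := by
  rcases two01 (tr n (x * a)) with htr | htr
  · obtain ⟨e, he, hte⟩ := artin_schreier n hn hodd (x * a) htr
    have hene : e ≠ 0 := fun h => by rw [h] at hte; simp at hte
    set d := e * x⁻¹ with hdd
    have hdne : d ≠ 0 := mul_ne_zero hene (inv_ne_zero hx)
    refine ⟨a + d, ?_, ?_⟩
    · intro h
      apply hdne
      calc d = a + (a + d) := by rw [← add_assoc, add_self, zero_add]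
        _ = a + a := by rw [h]
        _ = 0 := add_self n a
    · rw [BB_apply]
      have hsum : a + (a + d) = d := by rw [← add_assoc, add_self, zero_add]
      have he2 : e ^ 2 = x * a + e := by
        calc e ^ 2 = e ^ 2 + (e + e) := by rw [add_self, add_zero]
          _ = (e ^ 2 + e) + e := by ring
          _ = x * a + e := by rw [he]
      have hd2x : d ^ 2 * x = a + d := by
        rw [hdd]
        field_simp
        rw [he2]
      have hxd : x * d = e := by rw [hdd]; field_simp
      have htc : tr n (x * (a + d)) = 1 := by
        rw [mul_add, map_add, htr, hxd, hte, zero_add]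
      rw [hsum, hd2x, htr, htc, zero_smul, one_smul, zero_add, add_self]
  · have hax : x * a ≠ 0 := fun h => by rw [h] at htr; simp at htr
    have ha : a ≠ 0 := fun h => by rw [h, mul_zero] at hax; exact hax rfl
    set d := (frobeniusEquiv K 2).symm (a * x⁻¹) with hdd
    have hd2 : d ^ 2 = a * x⁻¹ := by
      have := frobenius_apply_frobeniusEquiv_symm K 2 (a * x⁻¹)
      rwa [_root_.frobenius_def] at this
    have hdne : d ≠ 0 := by
      intro h
      rw [h] at hd2
      exact (mul_ne_zero ha (inv_ne_zero hx)) (by rw [← hd2]; ring)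
    refine ⟨a + d, ?_, ?_⟩
    · intro h
      apply hdne
      calc d = a + (a + d) := by rw [← add_assoc, add_self, zero_add]
        _ = a + a := by rw [h]
        _ = 0 := add_self n a
    · rw [BB_apply]
      have hsum : a + (a + d) = d := by rw [← add_assoc, add_self, zero_add]
      have hd2x : d ^ 2 * x = a := by rw [hd2]; field_simp
      have hxd : tr n (x * d) = 1 := by
        have : (x * d) ^ 2 = x * a := by
          rw [mul_pow, hd2]
          field_simp
        rw [← tr_sq, this, htr]
      have htc : tr n (x * (a + d)) = 0 := by
        rw [mul_add, map_add, htr, hxd]; decide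
      rw [hsum, hd2x, htr, htc, one_smul, zero_smul, add_zero, add_self]

lemma span_of_finrank_one (P : Submodule (ZMod 2) K) (h : finrank (ZMod 2) P = 1) :
    ∃ x : K, x ≠ 0 ∧ P = Submodule.span (ZMod 2) {x} := by
  obtain ⟨v, hv, hspan⟩ := finrank_eq_one_iff'.mp h
  refine ⟨(v : K), fun h0 => hv (Subtype.ext h0), le_antisymm ?_ ?_⟩
  · intro w hw
    obtain ⟨cc, hcc⟩ := hspan ⟨w, hw⟩
    rw [Submodule.mem_span_singleton]
    exact ⟨cc, congrArg Subtype.val hcc⟩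
  · rw [Submodule.span_le, Set.singleton_subset_iff]
    exact v.2

end DHOShadow

/-- The shadow of the desarguesian spread-set: for `F = F_{2^n}` with `n` odd,
the operators `x ↦ a²x + Tr(xa)a` form a DHO-set of skew-symmetric operators
with respect to the trace form. -/
theorem desarguesian_shadow_is_DHO_set
    (n : ℕ) (hodd : Odd n) (hn : 1 < n) :
    let F := GaloisField 2 n
    let tr : F →ₗ[ZMod 2] ZMod 2 := Algebra.trace (ZMod 2) F
    let Bop : F → (F →ₗ[ZMod 2] F) := fun a =>
      LinearMap.mulLeft (ZMod 2) (a ^ 2) +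
        (tr ∘ₗ LinearMap.mulRight (ZMod 2) a).smulRight a
    -- each `B(a)` is skew-symmetric for the trace form `b(x,y) = Tr(xy)`,
    (∀ a x : F, tr (x * Bop a x) = 0) ∧
    -- `rk (B(a) + B(c)) = n - 1` for `a ≠ c`,
    (∀ a c : F, a ≠ c →
      Module.finrank (ZMod 2) (LinearMap.range (Bop a + Bop c)) = n - 1) ∧
    -- and for fixed `a` the kernels `ker (B(a)+B(c))`, `c ≠ a`, are exactly
    -- the 1-dimensional subspaces of `F`.
    (∀ a : F,
      {P : Submodule (ZMod 2) F | ∃ c : F, c ≠ a ∧ P = LinearMap.ker (Bop a + Bop c)} =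
        {P : Submodule (ZMod 2) F | Module.finrank (ZMod 2) P = 1}) := by
  intro F tr Bop
  have hn0 : n ≠ 0 := by omega
  have hBop : ∀ a : F, Bop a = DHOShadow.B n a := fun a => rfl
  refine ⟨fun a x => DHOShadow.skew n a x, ?_, ?_⟩
  · intro a c h
    rw [hBop, hBop]
    exact DHOShadow.rank_BB n hn0 hodd h
  · intro a
    ext P
    simp only [Set.mem_setOf_eq, hBop]
    constructor
    · rintro ⟨c, hca, rfl⟩
      exact DHOShadow.finrank_ker_BB n hn0 hodd (fun h => hca h.symm)
    · intro hP
      obtain ⟨x, hx, rfl⟩ := DHOShadow.span_of_finrank_one n P hP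
      obtain ⟨c, hca, hmem⟩ := DHOShadow.exists_c n hn0 hodd a hx
      refine ⟨c, hca, ?_⟩
      apply Submodule.eq_of_le_of_finrank_eq
      · rw [Submodule.span_le, Set.singleton_subset_iff]
        exact hmem
      · rw [finrank_span_singleton hx,
          DHOShadow.finrank_ker_BB n hn0 hodd (fun h => hca h.symm)]
end

section
/- Let p_1 ≤ p_2 ≤ … ≤ p_ℓ be odd primes. Then (2^{p_1} − 1)(2^{p_1 p_2} − 1) ⋯ (2^{p_1 p_2 ⋯ p_ℓ} − 1) / (p_1 p_2 ⋯ p_ℓ) ≥ 2^{3^ℓ}, unless (ℓ; p_1, …, p_ℓ) is (1; 3), (1; 5), or (2; 3, 3). -/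
private def mc (p : ℕ) : ℕ := if 7 ≤ p then (p-1)/2 else (p+1)/2

private lemma two_mul_add_one_le (k : ℕ) (hk : 3 ≤ k) : 2*k+1 ≤ 2^k := by
  induction k with
  | zero => omega
  | succ n ih =>
    rcases Nat.lt_or_ge n 3 with h | h
    · interval_cases n <;> simp_all
    · have h8 : 2^3 ≤ 2^n := Nat.pow_le_pow_right (by norm_num) h
      have := ih h
      simp [pow_succ]; omega

private lemma mc_le (p : ℕ) (ho : Odd p) (h3 : 3 ≤ p) : p ≤ 2 ^ mc p := by
  unfold mc
  split
  · rename_i h7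
    obtain ⟨k, hk⟩ := ho
    have hk3 : 3 ≤ k := by omega
    have h := two_mul_add_one_le k hk3
    have he : (p-1)/2 = k := by omega
    rw [he]; omega
  · rename_i h7
    obtain ⟨k, hk⟩ := ho
    interval_cases p <;> simp_all

private lemma mc_bound (p : ℕ) (h3 : 3 ≤ p) : 2 * mc p ≤ p + 1 ∧ 2 ≤ mc p ∧ mc p + 1 ≤ p := by
  unfold mc; split <;> omega

private lemma geo3 (n : ℕ) : 2 * (∑ i ∈ Finset.range n, 3^i) + 1 = 3^n := by
  induction n with
  | zero => simp
  | succ m ih => rw [Finset.sum_range_succ, pow_succ]; omega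

/-- For odd primes `p₁ ≤ … ≤ p_ℓ`,
`(2^{p₁}-1)(2^{p₁p₂}-1)⋯(2^{p₁⋯p_ℓ}-1) / (p₁⋯p_ℓ) ≥ 2^{3^ℓ}` unless
`(ℓ; p₁,…,p_ℓ) = (1;3), (1;5)` or `(2;3,3)`. -/
theorem product_mersenne_lower_bound
    (ℓ : ℕ) (hl : 1 ≤ ℓ) (p : Fin ℓ → ℕ)
    (hp : ∀ i, Nat.Prime (p i)) (hoddp : ∀ i, Odd (p i)) (hmono : Monotone p)
    (hexc1 : ¬(ℓ = 1 ∧ ∀ i, p i = 3))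
    (hexc2 : ¬(ℓ = 1 ∧ ∀ i, p i = 5))
    (hexc3 : ¬(ℓ = 2 ∧ ∀ i, p i = 3)) :
    (∏ i, p i) * 2 ^ 3 ^ ℓ ≤ ∏ i, (2 ^ (∏ j ∈ Finset.Iic i, p j) - 1) := by
  set P : Fin ℓ → ℕ := fun i => ∏ j ∈ Finset.Iic i, p j with hPdef
  have hp3 : ∀ i, 3 ≤ p i := by
    intro i
    have h2 := (hp i).two_le
    obtain ⟨k, hk⟩ := hoddp i
    omega
  -- P i ≥ 3^i * p i
  have hP : ∀ i : Fin ℓ, 3 ^ (i : ℕ) * p i ≤ P i := by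
    intro i
    have hsplit : P i = p i * ∏ j ∈ Finset.Iio i, p j := by
      show (∏ j ∈ Finset.Iic i, p j) = p i * ∏ j ∈ Finset.Iio i, p j
      rw [← Finset.Iio_insert, Finset.prod_insert (by simp)]
    have hcard : (Finset.Iio i).card = (i : ℕ) := by simp
    have h3 : 3 ^ (i : ℕ) ≤ ∏ j ∈ Finset.Iio i, p j := by
      rw [← hcard]
      exact Finset.pow_card_le_prod _ _ _ (fun j _ => hp3 j)
    calc 3 ^ (i : ℕ) * p i ≤ (∏ j ∈ Finset.Iio i, p j) * p i :=
          Nat.mul_le_mul_right _ h3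
      _ = P i := by rw [hsplit, mul_comm]
  have hPpos : ∀ i, 1 ≤ P i := by
    intro i
    have h1 := hP i
    have h2 := hp3 i
    have h3 : 1 * 1 ≤ 3 ^ (i : ℕ) * p i :=
      Nat.mul_le_mul (Nat.one_le_pow _ _ (by norm_num)) (by omega)
    omega
  -- core arithmetic claim
  have key : (∑ i, mc (p i)) + 3 ^ ℓ + ℓ ≤ ∑ i, P i := by
    rcases Nat.lt_or_ge ℓ 3 with hlt | hge
    · interval_cases ℓ
      · -- ℓ = 1
        have hp0 := hp (0 : Fin 1)
        have ho0 := hoddp (0 : Fin 1)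
        have h3 := hp3 (0 : Fin 1)
        have hne3 : p 0 ≠ 3 := by
          intro h; exact hexc1 ⟨rfl, fun i => by rw [Fin.fin_one_eq_zero i]; exact h⟩
        have hne5 : p 0 ≠ 5 := by
          intro h; exact hexc2 ⟨rfl, fun i => by rw [Fin.fin_one_eq_zero i]; exact h⟩
        have h7 : 7 ≤ p 0 := by
          obtain ⟨k, hk⟩ := ho0; omega
        have hP0 : P 0 = p 0 := by
          show (∏ j ∈ Finset.Iic (0 : Fin 1), p j) = p 0
          have h : Finset.Iic (0 : Fin 1) = {0} := by decide
          rw [h, Finset.prod_singleton]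
        rw [Fin.sum_univ_one, Fin.sum_univ_one, hP0]
        unfold mc
        split <;> omega
      · -- ℓ = 2
        have h30 := hp3 (0 : Fin 2)
        have h31 := hp3 (1 : Fin 2)
        have h51 : 5 ≤ p 1 := by
          by_contra h
          have hp1 : p 1 = 3 := by
            obtain ⟨k, hk⟩ := hoddp (1 : Fin 2); omega
          have hp0 : p 0 = 3 := by
            have := hmono (show (0:Fin 2) ≤ 1 by decide)
            omega
          exact hexc3 ⟨rfl, fun i => by fin_cases i <;> assumption⟩
        have hP0 : P 0 = p 0 := by
          show (∏ j ∈ Finset.Iic (0 : Fin 2), p j) = p 0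
          have h : Finset.Iic (0 : Fin 2) = {0} := by decide
          rw [h, Finset.prod_singleton]
        have hP1 : P 1 = p 0 * p 1 := by
          show (∏ j ∈ Finset.Iic (1 : Fin 2), p j) = p 0 * p 1
          have h : Finset.Iic (1 : Fin 2) = {0, 1} := by decide
          rw [h, Finset.prod_insert (by decide), Finset.prod_singleton]
        rw [Fin.sum_univ_two, Fin.sum_univ_two, hP0, hP1]
        obtain ⟨hc0a, hc0b, hc0c⟩ := mc_bound (p 0) h30
        obtain ⟨hc1a, hc1b, hc1c⟩ := mc_bound (p 1) h31
        have hmul : 3 * p 1 ≤ p 0 * p 1 := Nat.mul_le_mul_right _ h30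
        omega
    · -- ℓ ≥ 3
      set F : Fin ℓ → ℕ := fun i => if i = (⟨0, by omega⟩ : Fin ℓ) then 2 else 0 with hF
      set G : Fin ℓ → ℕ := fun i => if i = (⟨2, by omega⟩ : Fin ℓ) then 6 else 0 with hG
      have pointwise : ∀ i : Fin ℓ, mc (p i) + 1 + 2 * 3 ^ (i:ℕ) + G i ≤ P i + F i := by
        intro i
        obtain ⟨hca, hcb, hcc⟩ := mc_bound (p i) (hp3 i)
        have hPi := hP i
        by_cases hv0 : (i : ℕ) = 0
        · have hi : i = (⟨0, by omega⟩ : Fin ℓ) := by ext; exact hv0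
          have hG0 : G i = 0 := by
            rw [hG]; simp only [hi, ite_eq_right_iff, Fin.mk.injEq]
            omega
          have hF2 : F i = 2 := by rw [hF]; simp [hi]
          rw [hv0] at hPi
          simp only [pow_zero, one_mul] at hPi
          rw [hG0, hF2, hv0]
          simp only [pow_zero, mul_one]
          omega
        · have hF0 : F i = 0 := by
            rw [hF]; simp only [ite_eq_right_iff]
            intro h; exfalso; apply hv0; rw [h]
          rw [hF0]
          by_cases hv2 : (i : ℕ) = 2
          · have hi : i = (⟨2, by omega⟩ : Fin ℓ) := by ext; exact hv2
            have hG6 : G i = 6 := by rw [hG]; simp [hi]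
            rw [hG6, hv2]
            rw [hv2] at hPi
            norm_num at hPi ⊢
            omega
          · have hG0 : G i = 0 := by
              rw [hG]; simp only [ite_eq_right_iff]
              intro h; exfalso; apply hv2; rw [h]
            rw [hG0]
            obtain ⟨w, hw⟩ : ∃ w, (i : ℕ) = w + 1 := ⟨(i:ℕ) - 1, by omega⟩
            rw [hw] at hPi ⊢
            rw [pow_succ] at hPi ⊢
            set k := 3 ^ w with hk
            have hk1 : 1 ≤ k := Nat.one_le_pow _ _ (by norm_num)
            have h1 : k * 3 ≤ k * p i := Nat.mul_le_mul_left _ (hp3 i)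
            have h2 : p i ≤ k * p i := Nat.le_mul_of_pos_left _ hk1
            have h3 : k * 3 * p i = 3 * (k * p i) := by ring
            rw [h3] at hPi
            omega
      have hsum := Finset.sum_le_sum (fun i (_ : i ∈ Finset.univ) => pointwise i)
      rw [Finset.sum_add_distrib, Finset.sum_add_distrib, Finset.sum_add_distrib,
        Finset.sum_add_distrib] at hsum
      have hsF : (∑ i, F i) = 2 := by
        rw [hF, Finset.sum_ite_eq' Finset.univ]; simp
      have hsG : (∑ i, G i) = 6 := by
        rw [hG, Finset.sum_ite_eq' Finset.univ]; simp
      have hs1 : (∑ _i : Fin ℓ, 1) = ℓ := by simp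
      have hsgeo : (∑ i : Fin ℓ, 2 * 3 ^ (i:ℕ)) = 3 ^ ℓ - 1 := by
        rw [← Finset.mul_sum]
        rw [Fin.sum_univ_eq_sum_range (fun i => (3:ℕ) ^ i) ℓ]
        have := geo3 ℓ
        omega
      rw [hsF, hsG, hs1, hsgeo] at hsum
      have h3L : 1 ≤ 3 ^ ℓ := Nat.one_le_pow _ _ (by norm_num)
      omega
  -- assemble
  have step2 : (∏ i, p i) ≤ 2 ^ (∑ i, mc (p i)) := by
    rw [← Finset.prod_pow_eq_pow_sum]
    exact Finset.prod_le_prod' (fun i _ => mc_le (p i) (hoddp i) (hp3 i))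
  have step1 : (2:ℕ) ^ (∑ i, (P i - 1)) ≤ ∏ i, (2 ^ P i - 1) := by
    rw [← Finset.prod_pow_eq_pow_sum]
    apply Finset.prod_le_prod'
    intro i _
    have h1 := hPpos i
    have h2 : (2:ℕ) ^ P i = 2 * 2 ^ (P i - 1) := by
      conv_lhs => rw [show P i = (P i - 1) + 1 by omega]
      rw [pow_succ]; ring
    have h3 : 1 ≤ (2:ℕ) ^ (P i - 1) := Nat.one_le_pow _ _ (by norm_num)
    omega
  have hsumP : (∑ i, (P i - 1)) + ℓ = ∑ i, P i := by
    have h : ∀ i : Fin ℓ, P i = (P i - 1) + 1 := fun i => by have := hPpos i; omega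
    calc (∑ i, (P i - 1)) + ℓ = ∑ i, ((P i - 1) + 1) := by
          rw [Finset.sum_add_distrib]; simp
      _ = ∑ i, P i := Finset.sum_congr rfl (fun i _ => (h i).symm)
  calc (∏ i, p i) * 2 ^ 3 ^ ℓ ≤ 2 ^ (∑ i, mc (p i)) * 2 ^ 3 ^ ℓ :=
        Nat.mul_le_mul_right _ step2
    _ = 2 ^ ((∑ i, mc (p i)) + 3 ^ ℓ) := (pow_add 2 _ _).symm
    _ ≤ 2 ^ (∑ i, (P i - 1)) := Nat.pow_le_pow_right (by norm_num) (by omega)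
    _ ≤ ∏ i, (2 ^ P i - 1) := step1
end

section
/- Let q be a prime power, n > 1, V = F_q^n, and W = V ⊕ (V ∧ V) (the direct sum of V with its second exterior power). For t ∈ V set X(t) := {(x, x ∧ t) : x ∈ V}. Then D = {X(t) : t ∈ V} satisfies: (a) dim(X(s) ∩ X(t)) = 1 for all distinct s, t ∈ V; (b) every nonzero vector lying in some member of D lies in exactly q members of D; (c) D spans W. (That is, D is a qDHO of rank n.) -/
open ExteriorAlgebra

section aux

variable {F : Type*} [Field F] {V : Type*} [AddCommGroup V] [Module F V]

private lemma wedge_ne_zero_of_dual {x y : V} (φ ψ : V →ₗ[F] F)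
    (hφx : φ x = 1) (hφy : φ y = 0) (hψx : ψ x = 0) (hψy : ψ y = 1) :
    ι F x * ι F y ≠ 0 := by
  set L : V →ₗ[F] (Fin 2 → F) := LinearMap.pi ![φ, ψ] with hL
  set B : V [⋀^Fin 2]→ₗ[F] F := (Matrix.detRowAlternating).compLinearMap L with hB
  set f : ∀ i, V [⋀^Fin i]→ₗ[F] F := fun i =>
    match i with
    | 2 => B
    | _ => 0 with hf
  intro h
  have h1 : liftAlternating (R := F) (M := V) (N := F) f (ι F x * ι F y) = 1 := by
    rw [liftAlternating_ι_mul, liftAlternating_ι]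
    show Matrix.det (Matrix.of fun i => L (![x, y] i)) = 1
    rw [Matrix.det_fin_two]
    simp [hL, Matrix.cons_val_zero, Matrix.cons_val_one, Matrix.head_cons,
      LinearMap.pi_apply, hφx, hφy, hψx, hψy]
  rw [h, map_zero] at h1
  exact one_ne_zero h1.symm

private lemma wedge_ne_zero_of_indep {x y : V} (h : LinearIndependent F ![x, y]) :
    ι F x * ι F y ≠ 0 := by
  have hxy : x ≠ y := by
    intro he
    have := h.injective (a₁ := 0) (a₂ := 1) (by simp [he])
    simp at this
  have hs : LinearIndepOn F id (Set.range ![x, y]) :=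
    (linearIndepOn_id_range_iff h.injective).mpr h
  let b := Module.Basis.extend hs
  have hx : x ∈ hs.extend (Set.subset_univ _) :=
    hs.subset_extend _ ⟨0, rfl⟩
  have hy : y ∈ hs.extend (Set.subset_univ _) :=
    hs.subset_extend _ ⟨1, rfl⟩
  have hij : (⟨x, hx⟩ : hs.extend (Set.subset_univ _)) ≠ ⟨y, hy⟩ := by
    simpa using hxy
  have e1 : b ⟨x, hx⟩ = x := Module.Basis.extend_apply_self hs _
  have e2 : b ⟨y, hy⟩ = y := Module.Basis.extend_apply_self hs _
  refine wedge_ne_zero_of_dual (b.coord ⟨x, hx⟩) (b.coord ⟨y, hy⟩) ?_ ?_ ?_ ?_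
  · refine (congrArg _ e1).symm.trans ?_
    simp
  · refine (congrArg _ e2).symm.trans ?_
    simp only [Module.Basis.coord_apply, Module.Basis.repr_self]
    exact Finsupp.single_eq_of_ne' hij.symm
  · refine (congrArg _ e1).symm.trans ?_
    simp only [Module.Basis.coord_apply, Module.Basis.repr_self]
    exact Finsupp.single_eq_of_ne' hij
  · refine (congrArg _ e2).symm.trans ?_
    simp

/-- `ι x * ι y = 0 ↔ x ∈ span {y}` when `y ≠ 0`. -/
private lemma wedge_eq_zero_iff {x y : V} (hy : y ≠ 0) :
    ι F x * ι F y = 0 ↔ x ∈ Submodule.span F {y} := by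
  constructor
  · intro h
    by_contra hx
    have hind : LinearIndependent F ![y, x] := by
      rw [LinearIndependent.pair_iff' hy]
      intro a ha
      exact hx (ha ▸ Submodule.smul_mem _ a (Submodule.mem_span_singleton_self y))
    have h' : ι F y * ι F x = 0 := by
      have := ExteriorAlgebra.ι_add_mul_swap (R := F) x y
      rw [h, zero_add] at this
      exact this
    exact wedge_ne_zero_of_indep hind h'
  · intro hx
    obtain ⟨c, rfl⟩ := Submodule.mem_span_singleton.mp hx
    rw [map_smul, smul_mul_assoc, ι_sq_zero, smul_zero]

end aux

/-- Huybrechts-type construction: for `V = F_q^n` (`n > 1`), the subspaces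
`X(t) = {(x, x ∧ t) : x ∈ V}` of `V ⊕ Λ²V` form a `q`DHO of rank `n`:
pairwise intersections are 1-dimensional, every nonzero vector of the union
lies in exactly `q` members, and the members span `V ⊕ Λ²V`. -/
theorem huybrechts_qDHO
    (F : Type*) [Field F] [Fintype F]
    (V : Type*) [AddCommGroup V] [Module F V] [FiniteDimensional F V]
    (n : ℕ) (hn : Module.finrank F V = n) (h1 : 1 < n) :
    let ι := ExteriorAlgebra.ι F (M := V)
    let X : V → Submodule F (V × ExteriorAlgebra F V) := fun t =>
      LinearMap.range
        ((LinearMap.id : V →ₗ[F] V).prod ((LinearMap.mulRight F (ι t)) ∘ₗ ι))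
    let Λ2 : Submodule F (ExteriorAlgebra F V) :=
      Submodule.span F {w | ∃ x y : V, w = ι x * ι y}
    -- distinct parameters give distinct members,
    Function.Injective X ∧
    -- (a) two distinct members meet in dimension 1,
    (∀ s t : V, s ≠ t →
      Module.finrank F (X s ⊓ X t : Submodule F (V × ExteriorAlgebra F V)) = 1) ∧
    -- (b) every nonzero vector lying in some member lies in exactly `q` members,
    (∀ v : V × ExteriorAlgebra F V, v ≠ 0 → (∃ t, v ∈ X t) →
      {t : V | v ∈ X t}.ncard = Fintype.card F) ∧
    -- (c) the members span `V ⊕ Λ²V`.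
    (⨆ t : V, X t) = Submodule.prod ⊤ Λ2 := by
  intro ι X Λ2
  have hι : ι = ExteriorAlgebra.ι F := rfl
  -- membership criterion
  have hmem : ∀ (v : V × ExteriorAlgebra F V) (t : V),
      v ∈ X t ↔ ι v.1 * ι t = v.2 := by
    intro v t
    simp only [X, LinearMap.mem_range, LinearMap.prod_apply, LinearMap.coe_comp,
      Function.comp_apply, LinearMap.id_coe, id_eq, LinearMap.mulRight_apply,
      Pi.prod]
    constructor
    · rintro ⟨x, rfl⟩; rfl
    · intro h; exact ⟨v.1, Prod.ext rfl h⟩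
  have hsub : ∀ (x s t : V), (ι x * ι s = ι x * ι t) ↔ ι x * ι (s - t) = 0 := by
    intro x s t
    rw [map_sub, mul_sub, sub_eq_zero]
  have hswap : ∀ a b : V, ι a * ι b = 0 → ι b * ι a = 0 := by
    intro a b hab
    have h2 := ExteriorAlgebra.ι_add_mul_swap (R := F) a b
    rw [hι] at hab ⊢
    rw [hab, zero_add] at h2
    exact h2
  have hsq : ∀ a : V, ι a * ι a = 0 := by
    intro a; rw [hι]; exact ExteriorAlgebra.ι_sq_zero a
  refine ⟨?_, ?_, ?_, ?_⟩
  · -- injectivity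
    intro s t hst
    by_contra hne
    have hd : t - s ≠ 0 := sub_ne_zero.mpr (Ne.symm hne)
    have hall : ∀ x : V, x ∈ Submodule.span F {t - s} := by
      intro x
      have h1' : ((x, ι x * ι s) : V × ExteriorAlgebra F V) ∈ X s :=
        (hmem _ s).mpr rfl
      rw [hst] at h1'
      have h2 : ι x * ι t = ι x * ι s := (hmem _ t).mp h1'
      have h3 : ι x * ι (t - s) = 0 := (hsub x t s).mp h2
      rw [hι] at h3
      exact (wedge_eq_zero_iff hd).mp h3
    have htop : Submodule.span F {t - s} = ⊤ :=
      Submodule.eq_top_iff'.mpr hall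
    have hone : Module.finrank F V = 1 := by
      rw [← finrank_top F V, ← htop, finrank_span_singleton hd]
    omega
  · -- (a)
    intro s t hst
    have hd : s - t ≠ 0 := sub_ne_zero.mpr hst
    set φ : F →ₗ[F] V × ExteriorAlgebra F V :=
      ((LinearMap.id : V →ₗ[F] V).prod ((LinearMap.mulRight F (ι s)) ∘ₗ ι)) ∘ₗ
        LinearMap.toSpanSingleton F V (s - t) with hφ
    have hφapp : ∀ c : F, φ c = (c • (s - t), ι (c • (s - t)) * ι s) := fun c => rfl
    have hrange : X s ⊓ X t = LinearMap.range φ := by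
      ext v
      simp only [Submodule.mem_inf, hmem, LinearMap.mem_range]
      constructor
      · rintro ⟨h1', h2⟩
        have h3 : ι v.1 * ι (s - t) = 0 := by
          rw [← hsub, h1', h2]
        rw [hι] at h3
        obtain ⟨c, hc⟩ := Submodule.mem_span_singleton.mp
          ((wedge_eq_zero_iff hd).mp h3)
        refine ⟨c, ?_⟩
        rw [hφapp c, hc]
        exact Prod.ext rfl h1'
      · rintro ⟨c, rfl⟩
        rw [hφapp c]
        refine ⟨rfl, ?_⟩
        show ι (c • (s - t)) * ι t = ι (c • (s - t)) * ι s
        rw [hsub]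
        have : t - s = -(s - t) := (neg_sub s t).symm
        rw [this, map_neg, mul_neg, map_smul, smul_mul_assoc, hsq, smul_zero,
          neg_zero]
    rw [hrange]
    have hinj : Function.Injective φ := by
      intro a b hab
      rw [hφapp a, hφapp b, Prod.ext_iff] at hab
      exact smul_left_injective F hd hab.1
    rw [LinearMap.finrank_range_of_inj hinj, Module.finrank_self]
  · -- (b)
    rintro v hv ⟨s, hvs⟩
    have hval : ι v.1 * ι s = v.2 := (hmem v s).mp hvs
    have hx : v.1 ≠ 0 := by
      intro h0
      apply hv
      have h2 : v.2 = 0 := by rw [← hval, h0, map_zero, zero_mul]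
      exact Prod.ext h0 h2
    have hset : {t : V | v ∈ X t} = Set.range (fun c : F => s + c • v.1) := by
      ext t
      simp only [Set.mem_setOf_eq, hmem, Set.mem_range]
      constructor
      · intro h
        have h3 : ι v.1 * ι (t - s) = 0 := by
          rw [← hsub, h, hval]
        have h4 := hswap _ _ h3
        rw [hι] at h4
        obtain ⟨c, hc⟩ := Submodule.mem_span_singleton.mp
          ((wedge_eq_zero_iff hx).mp h4)
        exact ⟨c, by rw [hc]; abel⟩
      · rintro ⟨c, rfl⟩
        rw [← hval, hsub]
        have h5 : s + c • v.1 - s = c • v.1 := by abel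
        rw [h5, map_smul, mul_smul_comm, hsq, smul_zero]
    rw [hset]
    have hinj : Function.Injective (fun c : F => s + c • v.1) := by
      intro a b hab
      simp only [add_right_inj] at hab
      exact smul_left_injective F hx hab
    rw [← Set.image_univ, Set.ncard_image_of_injective _ hinj, Set.ncard_univ,
      Nat.card_eq_fintype_card]
  · -- (c)
    apply le_antisymm
    · apply iSup_le
      intro t
      rintro v ⟨x, rfl⟩
      exact Submodule.mem_prod.mpr ⟨trivial, Submodule.subset_span ⟨x, t, rfl⟩⟩
    · rintro ⟨v, w⟩ hvw
      have hw : w ∈ Λ2 := (Submodule.mem_prod.mp hvw).2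
      have hX0 : ∀ u : V, (u, (0 : ExteriorAlgebra F V)) ∈ ⨆ t, X t := by
        intro u
        apply Submodule.mem_iSup_of_mem 0
        rw [hmem]
        show ι u * ι 0 = 0
        rw [map_zero, mul_zero]
      have hsnd : ∀ z ∈ Λ2, ((0 : V), z) ∈ ⨆ t, X t := by
        intro z hz
        induction hz using Submodule.span_induction with
        | mem w hw' =>
          obtain ⟨x, y, rfl⟩ := hw'
          have h1' : ((x : V), ι x * ι y) ∈ ⨆ t, X t :=
            Submodule.mem_iSup_of_mem y ((hmem _ y).mpr rfl)
          have h2 := Submodule.sub_mem _ h1' (hX0 x)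
          simpa using h2
        | zero => exact Submodule.zero_mem _
        | add a b _ _ ha hb => simpa using Submodule.add_mem _ ha hb
        | smul c a _ ha => simpa using Submodule.smul_mem _ c ha
      have h6 := Submodule.add_mem _ (hX0 v) (hsnd w hw)
      simpa using h6
end
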